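/- arXiv:1912.01926 — 5 statements merged into one kernel-verified Lean document; each statement's English description precedes it below -/
import Mathlib

section
/- (Fractional Morrey estimate) Let Ω ⊆ ℝ^N be a bounded open set, 0 < s < 1 and 1 ≤ p < ∞ with sp > N, and set α = s − N/p. Then every u ∈ W^{s,p}_0(Ω) admits a continuous representative ũ, and there is a constant C depending on N, s, p and Ω such that [ũ]_α := sup_{x≠y, x,y∈Ω} |ũ(x)−ũ(y)|/|x−y|^α ≤ C [u]_{s,p}. -/
open MeasureTheory ENNReal Filter Topology
open Metric

noncomputable section

/-- `N`-dimensional Euclidean space. -/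
abbrev Euc (N : ℕ) := EuclideanSpace ℝ (Fin N)

/-- The `p`-th power of the Gagliardo seminorm:
`∬_{ℝ^N×ℝ^N} |u(x)-u(y)|^p / |x-y|^{N+sp} dx dy`. -/
def gagIntegral (N : ℕ) (s p : ℝ) (u : Euc N → ℝ) : ℝ≥0∞ :=
  ∫⁻ q : Euc N × Euc N,
    ENNReal.ofReal (|u q.1 - u q.2| ^ p / ‖q.1 - q.2‖ ^ ((N : ℝ) + s * p)) ∂volume

/-- The Gagliardo seminorm `[u]_{s,p}`. -/
def gagSemi (N : ℕ) (s p : ℝ) (u : Euc N → ℝ) : ℝ≥0∞ :=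
  gagIntegral N s p u ^ (1 / p)

/-- Membership in `W^{s,p}_0(Ω)`: `u ∈ L^p(ℝ^N)`, `[u]_{s,p} < ∞` and `u = 0` a.e. in `ℝ^N ∖ Ω`. -/
def memW0 (N : ℕ) (s p : ℝ) (Ω : Set (Euc N)) (u : Euc N → ℝ) : Prop :=
  MemLp u (ENNReal.ofReal p) volume ∧ gagSemi N s p u < ⊤ ∧
    ∀ᵐ x ∂(volume : Measure (Euc N)), x ∉ Ω → u x = 0

namespace FracMorrey
variable {N : ℕ} {s p : ℝ}

lemma ofReal_abs_integral_le {α : Type*} [MeasurableSpace α] (μ : Measure α) (f : α → ℝ) :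
    ENNReal.ofReal |∫ a, f a ∂μ| ≤ ∫⁻ a, ENNReal.ofReal |f a| ∂μ := by
  rw [← Real.enorm_eq_ofReal_abs]
  simpa only [Real.enorm_eq_ofReal_abs] using enorm_integral_le_lintegral_enorm (μ := μ) f

def avg (g : Euc N → ℝ) (x : Euc N) (r : ℝ) : ℝ :=
  (volume (closedBall x r)).toReal⁻¹ * ∫ ξ in closedBall x r, g ξ

lemma integrableOn_cb (hp : 1 ≤ p) {g : Euc N → ℝ}
    (hgp : MemLp g (ENNReal.ofReal p) volume) (x : Euc N) (r : ℝ) :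
    IntegrableOn g (closedBall x r) volume := by
  haveI : IsFiniteMeasure (volume.restrict (closedBall x r)) := ⟨by
    rw [Measure.restrict_apply_univ]; exact measure_closedBall_lt_top⟩
  exact (hgp.restrict _).integrable (ENNReal.one_le_ofReal.mpr hp)

lemma master (hp : 1 ≤ p) (hs : 0 < s)
    {g : Euc N → ℝ} (hgm : StronglyMeasurable g)
    (hgp : MemLp g (ENNReal.ofReal p) volume)
    (x y : Euc N) {r r' D : ℝ} (hr : 0 < r) (hr' : 0 < r')
    (hD : ∀ ξ ∈ closedBall x r, ∀ η ∈ closedBall y r', ‖ξ - η‖ ≤ D) :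
    ENNReal.ofReal |avg g x r - avg g y r'| ≤
      ((volume (closedBall x r) * volume (closedBall y r'))⁻¹) ^ (1 / p) *
        (ENNReal.ofReal (D ^ ((N : ℝ) + s * p)) * gagIntegral N s p g) ^ (1 / p) := by
  have hp0 : (0:ℝ) < p := lt_of_lt_of_le one_pos hp
  set B := closedBall x r with hB
  set B' := closedBall y r' with hB'
  set VB := volume B with hVB
  set VB' := volume B' with hVB'
  have hVB0 : VB ≠ 0 := (measure_closedBall_pos volume x hr).ne'
  have hVB'0 : VB' ≠ 0 := (measure_closedBall_pos volume y hr').ne'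
  have hVBtop : VB ≠ ∞ := measure_closedBall_lt_top.ne
  have hVB'top : VB' ≠ ∞ := measure_closedBall_lt_top.ne
  have hVBt0 : VB.toReal ≠ 0 := by simp [ENNReal.toReal_ne_zero, hVB0, hVBtop]
  have hVB't0 : VB'.toReal ≠ 0 := by simp [ENNReal.toReal_ne_zero, hVB'0, hVB'top]
  have hgB : IntegrableOn g B volume := integrableOn_cb hp hgp x r
  have hgB' : IntegrableOn g B' volume := integrableOn_cb hp hgp y r'
  set c := avg g y r' with hc
  set G : Euc N × Euc N → ℝ := fun z => g z.1 - g z.2 with hG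
  have hGm : Measurable G :=
    (hgm.measurable.comp measurable_fst).sub (hgm.measurable.comp measurable_snd)
  set ν : Measure (Euc N × Euc N) := (volume.restrict B).prod (volume.restrict B') with hν
  -- Step 1: reduce to double lintegral
  have key1 : avg g x r - c = VB.toReal⁻¹ * ∫ ξ in B, (g ξ - c) ∂volume := by
    rw [integral_sub hgB (integrableOn_const measure_closedBall_lt_top.ne),
      setIntegral_const, measureReal_def, smul_eq_mul, mul_sub, inv_mul_cancel_left₀ hVBt0]
    rfl
  have key2 : ∀ ξ : Euc N, g ξ - c = VB'.toReal⁻¹ * ∫ η in B', (g ξ - g η) ∂volume := by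
    intro ξ
    rw [integral_sub (integrableOn_const (C := g ξ) measure_closedBall_lt_top.ne) hgB',
      setIntegral_const, measureReal_def, smul_eq_mul, mul_sub, inv_mul_cancel_left₀ hVB't0]
    rfl
  have stepA : ENNReal.ofReal |avg g x r - c| ≤
      VB⁻¹ * ∫⁻ ξ in B, ENNReal.ofReal |g ξ - c| ∂volume := by
    rw [key1, abs_mul, abs_of_nonneg (inv_nonneg.2 ENNReal.toReal_nonneg),
      ENNReal.ofReal_mul (inv_nonneg.2 ENNReal.toReal_nonneg),
      ENNReal.ofReal_inv_of_pos (lt_of_le_of_ne ENNReal.toReal_nonneg (Ne.symm hVBt0)),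
      ENNReal.ofReal_toReal hVBtop]
    gcongr
    exact ofReal_abs_integral_le _ _
  have stepB : (∫⁻ ξ in B, ENNReal.ofReal |g ξ - c| ∂volume) ≤
      VB'⁻¹ * ∫⁻ ξ in B, ∫⁻ η in B', ENNReal.ofReal |g ξ - g η| ∂volume ∂volume := by
    rw [← lintegral_const_mul' _ _ (ENNReal.inv_ne_top.2 hVB'0)]
    apply lintegral_mono
    intro ξ
    dsimp only
    rw [key2 ξ, abs_mul, abs_of_nonneg (inv_nonneg.2 ENNReal.toReal_nonneg),
      ENNReal.ofReal_mul (inv_nonneg.2 ENNReal.toReal_nonneg),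
      ENNReal.ofReal_inv_of_pos (lt_of_le_of_ne ENNReal.toReal_nonneg (Ne.symm hVB't0)),
      ENNReal.ofReal_toReal hVB'top]
    gcongr
    exact ofReal_abs_integral_le _ _
  have hiter : (∫⁻ ξ in B, ∫⁻ η in B', ENNReal.ofReal |g ξ - g η| ∂volume ∂volume)
      = ∫⁻ z, ENNReal.ofReal |G z| ∂ν := by
    rw [hν, lintegral_prod _ (by exact (hGm.abs.ennreal_ofReal).aemeasurable)]
  -- Step 2: Hölder
  have h1 : (∫⁻ z, ENNReal.ofReal |G z| ∂ν) = eLpNorm G 1 ν := by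
    rw [eLpNorm_one_eq_lintegral_enorm]
    simp_rw [Real.enorm_eq_ofReal_abs]
  have hP1 : (1:ℝ≥0∞) ≤ ENNReal.ofReal p := ENNReal.one_le_ofReal.mpr hp
  have hPtR : (ENNReal.ofReal p).toReal = p := ENNReal.toReal_ofReal hp0.le
  have hPne0 : (ENNReal.ofReal p) ≠ 0 := by
    intro h; rw [h] at hP1; simp at hP1
  have hmeas : AEStronglyMeasurable G ν := hGm.stronglyMeasurable.aestronglyMeasurable
  have hhold := eLpNorm_le_eLpNorm_mul_rpow_measure_univ (p := 1) (q := ENNReal.ofReal p) hP1 hmeas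
  have hνuniv : ν Set.univ = VB * VB' := by
    rw [hν, ← Set.univ_prod_univ, Measure.prod_prod, Measure.restrict_apply_univ,
      Measure.restrict_apply_univ]
  rw [ENNReal.toReal_one, hPtR, hνuniv, show (1/(1:ℝ) - 1/p) = 1 - 1/p by norm_num] at hhold
  have h2 : eLpNorm G (ENNReal.ofReal p) ν
      = (∫⁻ z, ENNReal.ofReal (|G z| ^ p) ∂ν) ^ (1/p) := by
    rw [eLpNorm_eq_lintegral_rpow_enorm_toReal hPne0 ENNReal.ofReal_ne_top, hPtR]
    congr 1
    apply lintegral_congr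
    intro z
    rw [Real.enorm_eq_ofReal_abs, ENNReal.ofReal_rpow_of_nonneg (abs_nonneg _) hp0.le]
  -- Step 3: compare with the Gagliardo integral
  have hD0 : (0:ℝ) ≤ D :=
    le_trans (norm_nonneg _) (hD x (mem_closedBall_self hr.le) y (mem_closedBall_self hr'.le))
  have he : (0:ℝ) < (N:ℝ) + s * p := by positivity
  have h3 : (∫⁻ z, ENNReal.ofReal (|G z| ^ p) ∂ν) ≤
      ENNReal.ofReal (D ^ ((N:ℝ) + s * p)) * gagIntegral N s p g := by
    rw [hν, Measure.prod_restrict, ← Measure.volume_eq_prod]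
    calc (∫⁻ z in B ×ˢ B', ENNReal.ofReal (|G z| ^ p) ∂volume)
        ≤ ∫⁻ z in B ×ˢ B', ENNReal.ofReal (D ^ ((N:ℝ) + s*p)) *
            ENNReal.ofReal (|G z| ^ p / ‖z.1 - z.2‖ ^ ((N:ℝ) + s*p)) ∂volume := by
          apply setLIntegral_mono' (measurableSet_closedBall.prod measurableSet_closedBall)
          rintro ⟨ξ, η⟩ hz
          by_cases hzz : ξ = η
          · have : G (ξ, η) = 0 := by simp [hG, hzz]
            rw [this]
            simp [Real.zero_rpow hp0.ne']
          · have h1' : (0:ℝ) < ‖ξ - η‖ := by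
              rw [norm_pos_iff]; exact sub_ne_zero_of_ne hzz
            have h2' : ‖ξ - η‖ ≤ D := hD ξ hz.1 η hz.2
            rw [← ENNReal.ofReal_mul (by positivity)]
            apply ENNReal.ofReal_le_ofReal
            have hne : ‖ξ - η‖ ^ ((N:ℝ) + s*p) ≠ 0 := by positivity
            calc |G (ξ, η)| ^ p
                = (|G (ξ, η)| ^ p / ‖ξ - η‖ ^ ((N:ℝ) + s*p)) * ‖ξ - η‖ ^ ((N:ℝ) + s*p) :=
                  (div_mul_cancel₀ _ hne).symm
              _ ≤ (|G (ξ, η)| ^ p / ‖ξ - η‖ ^ ((N:ℝ) + s*p)) * D ^ ((N:ℝ) + s*p) := by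
                  apply mul_le_mul_of_nonneg_left (Real.rpow_le_rpow h1'.le h2' he.le)
                  positivity
              _ = D ^ ((N:ℝ) + s*p) * (|G (ξ, η)| ^ p / ‖ξ - η‖ ^ ((N:ℝ) + s*p)) := mul_comm _ _
      _ = ENNReal.ofReal (D ^ ((N:ℝ) + s*p)) *
            ∫⁻ z in B ×ˢ B', ENNReal.ofReal (|G z| ^ p / ‖z.1 - z.2‖ ^ ((N:ℝ) + s*p)) ∂volume := by
          rw [lintegral_const_mul' _ _ ENNReal.ofReal_ne_top]
      _ ≤ ENNReal.ofReal (D ^ ((N:ℝ) + s*p)) * gagIntegral N s p g := by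
          gcongr
          exact setLIntegral_le_lintegral _ _
  -- Assemble
  set a := VB * VB' with ha
  have ha0 : a ≠ 0 := mul_ne_zero hVB0 hVB'0
  have hatop : a ≠ ∞ := ENNReal.mul_ne_top hVBtop hVB'top
  have halg : a⁻¹ * a ^ (1 - 1/p) = (a⁻¹) ^ (1/p) :=
    calc a⁻¹ * a ^ (1 - 1/p) = a ^ (-1:ℝ) * a ^ (1 - 1/p) := by rw [ENNReal.rpow_neg_one]
      _ = a ^ (-1 + (1 - 1/p)) := (ENNReal.rpow_add _ _ ha0 hatop).symm
      _ = a ^ (-(1/p)) := by congr 1; ring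
      _ = (a ^ (1/p))⁻¹ := ENNReal.rpow_neg a _
      _ = (a⁻¹) ^ (1/p) := by rw [ENNReal.inv_rpow]
  have hsnorm : eLpNorm G (ENNReal.ofReal p) ν ≤
      (ENNReal.ofReal (D ^ ((N:ℝ) + s * p)) * gagIntegral N s p g) ^ (1/p) := by
    rw [h2]
    exact ENNReal.rpow_le_rpow h3 (by positivity)
  calc ENNReal.ofReal |avg g x r - avg g y r'|
      ≤ VB⁻¹ * (VB'⁻¹ * ∫⁻ ξ in B, ∫⁻ η in B', ENNReal.ofReal |g ξ - g η| ∂volume ∂volume) :=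
        le_trans stepA (by gcongr)
    _ = a⁻¹ * ∫⁻ z, ENNReal.ofReal |G z| ∂ν := by
        rw [← hiter, ha, ENNReal.mul_inv (Or.inl hVB0) (Or.inl hVBtop), mul_assoc]
    _ = a⁻¹ * eLpNorm G 1 ν := by rw [h1]
    _ ≤ a⁻¹ * (eLpNorm G (ENNReal.ofReal p) ν * a ^ (1 - 1/p)) := by gcongr
    _ ≤ a⁻¹ * ((ENNReal.ofReal (D ^ ((N:ℝ) + s * p)) * gagIntegral N s p g) ^ (1/p)
          * a ^ (1 - 1/p)) := by gcongr
    _ = (a⁻¹ * a ^ (1 - 1/p)) *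
          (ENNReal.ofReal (D ^ ((N:ℝ) + s * p)) * gagIntegral N s p g) ^ (1/p) := by ring
    _ = (a⁻¹) ^ (1/p) *
          (ENNReal.ofReal (D ^ ((N:ℝ) + s * p)) * gagIntegral N s p g) ^ (1/p) := by rw [halg]

end FracMorrey

namespace FracMorrey2
open FracMorrey

variable {N : ℕ} {s p : ℝ}

/-- normalizing constant: volume of the unit ball. -/
def kta (N : ℕ) : ℝ := (volume (ball (0 : Euc N) 1)).toReal

lemma kta_pos : 0 < kta N :=
  ENNReal.toReal_pos (measure_ball_pos volume 0 one_pos).ne' measure_ball_lt_top.ne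

/-- The constant in the scaled master estimate. -/
def C0 (N : ℕ) (s p : ℝ) : ℝ :=
  (2:ℝ) ^ ((2*(N:ℝ))/p) * 3 ^ (((N:ℝ)+s*p)/p) * (kta N) ^ (-(2/p))

lemma C0_pos : 0 < C0 N s p := by
  have := kta_pos (N := N); unfold C0; positivity

lemma master' (hp : 1 ≤ p) (hs : 0 < s)
    {g : Euc N → ℝ} (hgm : StronglyMeasurable g)
    (hgp : MemLp g (ENNReal.ofReal p) volume) (hI : gagIntegral N s p g ≠ ∞)
    (x y : Euc N) {ρ r r' : ℝ} (hρ : 0 < ρ)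
    (hr1 : ρ/2 ≤ r) (hr2 : r ≤ ρ) (hr1' : ρ/2 ≤ r') (hr2' : r' ≤ ρ)
    (hxy : dist x y ≤ ρ) :
    |avg g x r - avg g y r'| ≤
      C0 N s p * ((gagIntegral N s p g) ^ (1/p)).toReal * ρ ^ (s - (N:ℝ)/p) := by
  have hp0 : (0:ℝ) < p := lt_of_lt_of_le one_pos hp
  have hr : 0 < r := lt_of_lt_of_le (half_pos hρ) hr1
  have hr' : 0 < r' := lt_of_lt_of_le (half_pos hρ) hr1'
  have hβ : (0:ℝ) < ρ/2 := half_pos hρ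
  set e : ℝ := (N:ℝ) + s * p with he_def
  have he : 0 < e := by positivity
  have hD : ∀ ξ ∈ closedBall x r, ∀ η ∈ closedBall y r', ‖ξ - η‖ ≤ 3 * ρ := by
    intro ξ hξ η hη
    have h1 : dist ξ η ≤ dist ξ x + dist x y + dist y η := dist_triangle4 ξ x y η
    have h2 : dist ξ x ≤ r := mem_closedBall.mp hξ
    have h3 : dist y η ≤ r' := by rw [dist_comm]; exact mem_closedBall.mp hη
    rw [← dist_eq_norm]
    linarith
  have hM := master hp hs hgm hgp x y hr hr' hD
  set I := gagIntegral N s p g with hI_def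
  set κ := volume (ball (0 : Euc N) 1) with hκ_def
  have hκtop : κ ≠ ∞ := measure_ball_lt_top.ne
  have hκt : kta N = κ.toReal := rfl
  set W : ℝ := (ρ/2) ^ N * kta N with hW_def
  have hW : 0 < W := by have := kta_pos (N := N); positivity
  -- lower bound on ball volumes
  have hvol : ∀ z : Euc N, ∀ t : ℝ, ρ/2 ≤ t →
      ENNReal.ofReal W ≤ volume (closedBall z t) := by
    intro z t ht
    have h1 : volume (closedBall z (ρ/2)) = ENNReal.ofReal ((ρ/2) ^ N) * κ := by
      rw [Measure.addHaar_closedBall volume z hβ.le, finrank_euclideanSpace_fin]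
    calc ENNReal.ofReal W = ENNReal.ofReal ((ρ/2) ^ N) * ENNReal.ofReal (kta N) := by
          rw [← ENNReal.ofReal_mul (by positivity)]
      _ = ENNReal.ofReal ((ρ/2) ^ N) * κ := by rw [hκt, ENNReal.ofReal_toReal hκtop]
      _ = volume (closedBall z (ρ/2)) := h1.symm
      _ ≤ volume (closedBall z t) := measure_mono (closedBall_subset_closedBall ht)
  -- bound the RHS of the master estimate
  set c : ℝ := ((W * W)⁻¹) ^ (1/p) * ((3*ρ) ^ e) ^ (1/p) with hc_def
  have hcpos : 0 < c := by positivity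
  have hRHS : ((volume (closedBall x r) * volume (closedBall y r'))⁻¹) ^ (1 / p) *
        (ENNReal.ofReal ((3*ρ) ^ e) * I) ^ (1 / p) ≤
      ENNReal.ofReal c * I ^ (1/p) := by
    have h1 : (volume (closedBall x r) * volume (closedBall y r'))⁻¹ ≤
        ENNReal.ofReal ((W * W)⁻¹) := by
      rw [ENNReal.ofReal_inv_of_pos (by positivity : (0:ℝ) < W * W),
        ENNReal.ofReal_mul hW.le]
      exact ENNReal.inv_le_inv' (mul_le_mul' (hvol x r hr1) (hvol y r' hr1'))
    calc ((volume (closedBall x r) * volume (closedBall y r'))⁻¹) ^ (1 / p) *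
          (ENNReal.ofReal ((3*ρ) ^ e) * I) ^ (1 / p)
        ≤ (ENNReal.ofReal ((W * W)⁻¹)) ^ (1/p) *
          (ENNReal.ofReal ((3*ρ) ^ e) * I) ^ (1 / p) := by
          gcongr
      _ = ENNReal.ofReal (((W * W)⁻¹) ^ (1/p)) *
          (ENNReal.ofReal (((3*ρ) ^ e) ^ (1/p)) * I ^ (1/p)) := by
          rw [ENNReal.mul_rpow_of_nonneg _ _ (by positivity : (0:ℝ) ≤ 1/p),
            ENNReal.ofReal_rpow_of_pos (by positivity),
            ENNReal.ofReal_rpow_of_pos (by positivity)]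
      _ = ENNReal.ofReal c * I ^ (1/p) := by
          rw [hc_def, ENNReal.ofReal_mul (by positivity)]; ring
  have hfin : ENNReal.ofReal c * I ^ (1/p) ≠ ∞ :=
    ENNReal.mul_ne_top ENNReal.ofReal_ne_top
      (ENNReal.rpow_ne_top_of_nonneg (by positivity) hI)
  -- real-number bound
  have hreal : |avg g x r - avg g y r'| ≤ c * (I ^ (1/p)).toReal := by
    have h2 := (hM.trans hRHS)
    have h3 := ENNReal.toReal_mono hfin h2
    rwa [ENNReal.toReal_ofReal (abs_nonneg _), ENNReal.toReal_mul,
      ENNReal.toReal_ofReal hcpos.le] at h3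
  refine hreal.trans (le_of_eq ?_)
  -- identity for the constants
  have hc_eq : c = C0 N s p * ρ ^ (s - (N:ℝ)/p) := by
    have hκtpos := kta_pos (N := N)
    have hRpos : 0 < C0 N s p * ρ ^ (s - (N:ℝ)/p) := by
      have := C0_pos (N := N) (s := s) (p := p); positivity
    apply Real.log_injOn_pos (Set.mem_Ioi.2 hcpos) (Set.mem_Ioi.2 hRpos)
    have l1 : Real.log c = (1/p) * Real.log ((W*W)⁻¹) + (1/p) * Real.log ((3*ρ)^e) := by
      rw [hc_def, Real.log_mul (by positivity) (by positivity),
        Real.log_rpow (by positivity), Real.log_rpow (by positivity)]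
    have l2 : Real.log ((W*W)⁻¹)
        = -(2 * ((N:ℝ) * (Real.log ρ - Real.log 2) + Real.log (kta N))) := by
      rw [Real.log_inv, Real.log_mul hW.ne' hW.ne', hW_def,
        Real.log_mul (by positivity) hκtpos.ne', Real.log_pow,
        Real.log_div hρ.ne' two_ne_zero]
      push_cast; ring
    have l3 : Real.log ((3*ρ)^e) = e * (Real.log 3 + Real.log ρ) := by
      rw [Real.log_rpow (by positivity), Real.log_mul (by norm_num) hρ.ne']
    have l4 : Real.log (C0 N s p * ρ ^ (s - (N:ℝ)/p))
        = (2*(N:ℝ)/p) * Real.log 2 + (e/p) * Real.log 3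
          + (-(2/p)) * Real.log (kta N) + (s - (N:ℝ)/p) * Real.log ρ := by
      unfold C0
      rw [Real.log_mul (by positivity) (by positivity),
        Real.log_mul (by positivity) (by positivity),
        Real.log_mul (by positivity) (by positivity),
        Real.log_rpow (by norm_num), Real.log_rpow (by norm_num),
        Real.log_rpow hκtpos, Real.log_rpow hρ, he_def]
    rw [l1, l2, l3, l4, he_def]
    field_simp
    ring
  rw [hc_eq]; ring

end FracMorrey2


section Main
open FracMorrey FracMorrey2

/-- Fractional Morrey estimate: if `sp > N` and `α = s - N/p`, every
`u ∈ W^{s,p}_0(Ω)` (with `Ω` bounded open) has a continuous representative `ũ` whose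
`α`-Hölder seminorm on `Ω` is controlled by `[u]_{s,p}`, with a constant independent of `u`. -/
theorem fractional_morrey (N : ℕ) (Ω : Set (Euc N)) (hΩo : IsOpen Ω)
    (hΩb : Bornology.IsBounded Ω) (s p : ℝ) (hs : 0 < s) (hs1 : s < 1) (hp : 1 ≤ p)
    (hsp : (N : ℝ) < s * p) :
    ∃ C : ℝ, 0 < C ∧ ∀ u : Euc N → ℝ, memW0 N s p Ω u →
      ∃ ut : Euc N → ℝ, Continuous ut ∧ ut =ᵐ[volume] u ∧
        ∀ x ∈ Ω, ∀ y ∈ Ω, x ≠ y →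
          |ut x - ut y| ≤ C * (gagSemi N s p u).toReal * ‖x - y‖ ^ (s - N / p) := by
  classical
  have hp0 : (0:ℝ) < p := lt_of_lt_of_le one_pos hp
  set α : ℝ := s - (N:ℝ)/p with hα_def
  have hα : 0 < α := by
    rw [hα_def, sub_pos, div_lt_iff₀ hp0]; linarith [hsp]
  set q : ℝ := (2:ℝ) ^ (-α) with hq_def
  have hq0 : 0 < q := Real.rpow_pos_of_pos (by norm_num) _
  have hq1 : q < 1 :=
    Real.rpow_lt_one_of_one_lt_of_neg (by norm_num) (neg_lt_zero.mpr hα)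
  have hC0 : 0 < C0 N s p := C0_pos
  set C3 : ℝ := C0 N s p / (1 - q) with hC3_def
  have hC3 : 0 < C3 := div_pos hC0 (by linarith)
  have hC0C3 : C0 N s p ≤ C3 := by
    rw [hC3_def, le_div_iff₀ (by linarith)]
    nlinarith [hC0.le, hq0.le]
  refine ⟨2*C3 + C0 N s p, by positivity, ?_⟩
  rintro u ⟨hu1, hu2, -⟩
  obtain ⟨g, hgm, hug⟩ : ∃ g : Euc N → ℝ, StronglyMeasurable g ∧ u =ᵐ[volume] g :=
    ⟨hu1.aestronglyMeasurable.mk u, hu1.aestronglyMeasurable.stronglyMeasurable_mk,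
      hu1.aestronglyMeasurable.ae_eq_mk⟩
  have hgg : gagIntegral N s p g = gagIntegral N s p u := by
    apply lintegral_congr_ae
    have h1 : (fun z : Euc N × Euc N => u z.1) =ᵐ[volume] fun z => g z.1 :=
      Measure.quasiMeasurePreserving_fst.ae_eq_comp hug
    have h2 : (fun z : Euc N × Euc N => u z.2) =ᵐ[volume] fun z => g z.2 :=
      Measure.quasiMeasurePreserving_snd.ae_eq_comp hug
    filter_upwards [h1, h2] with z e1 e2
    rw [e1, e2]
  have hIu : gagIntegral N s p u ≠ ∞ := by
    intro h
    rw [gagSemi, h, ENNReal.top_rpow_of_pos (by positivity)] at hu2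
    exact lt_irrefl _ hu2
  have hI : gagIntegral N s p g ≠ ∞ := by rw [hgg]; exact hIu
  have hgp : MemLp g (ENNReal.ofReal p) volume := hu1.ae_eq hug
  set Itr : ℝ := ((gagIntegral N s p g) ^ (1/p)).toReal with hItr_def
  have hItr0 : 0 ≤ Itr := ENNReal.toReal_nonneg
  -- telescoping estimate
  have tele : ∀ n : ℕ, ∀ x : Euc N, ∀ r r' : ℝ, 0 < r' → r' ≤ r → r ≤ 2^n * r' →
      |avg g x r' - avg g x r| ≤ C3 * Itr * r ^ α := by
    intro n
    induction n with
    | zero =>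
      intro x r r' h1 h2 h3
      rw [pow_zero, one_mul] at h3
      rw [le_antisymm h3 h2, sub_self, abs_zero]
      have hr0 : 0 < r := lt_of_lt_of_le h1 h2
      positivity
    | succ n ih =>
      intro x r r' h1 h2 h3
      have hr0 : 0 < r := lt_of_lt_of_le h1 h2
      by_cases hcase : r ≤ 2*r'
      · have hM := master' hp hs hgm hgp hI x x (ρ := r) (r := r) (r' := r') hr0
          (by linarith) le_rfl (by linarith) h2 (by rw [dist_self]; exact hr0.le)
        calc |avg g x r' - avg g x r| = |avg g x r - avg g x r'| := abs_sub_comm _ _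
          _ ≤ C0 N s p * Itr * r ^ α := hM
          _ ≤ C3 * Itr * r ^ α := by gcongr
      · have h2' : r' ≤ r/2 := by linarith
        have i1 := ih x (r/2) r' h1 h2' (by
          have : (2:ℝ)^(n+1) = 2 * 2^n := by ring
          rw [this] at h3; linarith)
        have i2 := master' hp hs hgm hgp hI x x (ρ := r) (r := r/2) (r' := r) hr0
          le_rfl (by linarith) (by linarith) le_rfl (by rw [dist_self]; exact hr0.le)
        have hhalf : (r/2) ^ α = r ^ α * q := by
          rw [hq_def, div_eq_mul_inv, Real.mul_rpow hr0.le (by norm_num),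
            Real.rpow_neg (by norm_num : (0:ℝ) ≤ 2), Real.inv_rpow (by norm_num)]
        have h1q : (1:ℝ) - q ≠ 0 := by linarith
        have hqid : C3 * q + C0 N s p = C3 := by
          rw [hC3_def]; field_simp; ring
        rw [hhalf] at i1
        have i2' : |avg g x (r/2) - avg g x r| ≤ C0 N s p * Itr * r ^ α := i2
        calc |avg g x r' - avg g x r|
            ≤ |avg g x r' - avg g x (r/2)| + |avg g x (r/2) - avg g x r| := abs_sub_le _ _ _
          _ ≤ C3 * Itr * (r ^ α * q) + C0 N s p * Itr * r ^ α := add_le_add i1 i2'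
          _ = (C3 * q + C0 N s p) * (Itr * r ^ α) := by ring
          _ = C3 * (Itr * r ^ α) := by rw [hqid]
          _ = C3 * Itr * r ^ α := by ring
  have tele' : ∀ (x : Euc N) (r r' : ℝ), 0 < r' → r' ≤ r →
      |avg g x r' - avg g x r| ≤ C3 * Itr * r ^ α := by
    intro x r r' h1 h2
    obtain ⟨n, hn⟩ := pow_unbounded_of_one_lt (y := (2:ℝ)) (r / r') one_lt_two
    refine tele n x r r' h1 h2 ?_
    rw [div_lt_iff₀ h1] at hn
    linarith
  -- the sequence of averages converges
  have hradpos : ∀ k : ℕ, (0:ℝ) < (1/2)^k := fun k => by positivity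
  have hrad0 : Tendsto (fun k : ℕ => ((1/2:ℝ))^k) atTop (𝓝 0) :=
    tendsto_pow_atTop_nhds_zero_of_lt_one (by norm_num) (by norm_num)
  have hpowα : ∀ k : ℕ, (((1/2:ℝ))^k) ^ α = ((1/2:ℝ) ^ α)^k := by
    intro k
    rw [← Real.rpow_natCast (1/2 : ℝ) k, ← Real.rpow_mul (by norm_num), mul_comm,
      Real.rpow_mul (by norm_num), Real.rpow_natCast]
  have hqq1 : (1/2:ℝ) ^ α < 1 :=
    Real.rpow_lt_one (by norm_num) (by norm_num) hα
  have hqq0 : (0:ℝ) ≤ (1/2:ℝ) ^ α := (Real.rpow_pos_of_pos (by norm_num) _).le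
  have hbound_tend : Tendsto (fun K : ℕ => C3 * Itr * (((1/2:ℝ))^K) ^ α) atTop (𝓝 0) := by
    simp_rw [hpowα]
    have := (tendsto_pow_atTop_nhds_zero_of_lt_one hqq0 hqq1).const_mul (C3 * Itr)
    simpa using this
  have hcauchy : ∀ x : Euc N, CauchySeq (fun k => avg g x ((1/2)^k)) := by
    intro x
    rw [Metric.cauchySeq_iff']
    intro ε hε
    obtain ⟨K, hK⟩ := (hbound_tend.eventually (gt_mem_nhds hε)).exists
    refine ⟨K, fun n hn => ?_⟩
    rw [Real.dist_eq]
    calc |avg g x ((1/2)^n) - avg g x ((1/2)^K)|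
        ≤ C3 * Itr * (((1/2:ℝ))^K) ^ α :=
          tele' x ((1/2)^K) ((1/2)^n) (hradpos n)
            (pow_le_pow_of_le_one (by norm_num) (by norm_num) hn)
      _ < ε := hK
  set ut : Euc N → ℝ := fun x => limUnder atTop (fun k => avg g x ((1/2)^k)) with hut_def
  have hlim : ∀ x : Euc N, Tendsto (fun k => avg g x ((1/2)^k)) atTop (𝓝 (ut x)) :=
    fun x => (hcauchy x).tendsto_limUnder
  -- E1
  have E1 : ∀ (x : Euc N) (r : ℝ), 0 < r → |ut x - avg g x r| ≤ C3 * Itr * r ^ α := by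
    intro x r hr
    have hconv : Tendsto (fun k => |avg g x ((1/2)^k) - avg g x r|) atTop
        (𝓝 |ut x - avg g x r|) := (((hlim x).sub_const _).abs)
    refine le_of_tendsto hconv ?_
    filter_upwards [hrad0.eventually (gt_mem_nhds hr)] with k hk
    exact tele' x r ((1/2)^k) (hradpos k) hk.le
  -- E3: global Hölder estimate
  have E3 : ∀ x y : Euc N, x ≠ y →
      |ut x - ut y| ≤ (2*C3 + C0 N s p) * Itr * (dist x y) ^ α := by
    intro x y hne
    set d : ℝ := dist x y with hd_def
    have hd : 0 < d := dist_pos.mpr hne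
    have e1 := E1 x d hd
    have e2 := E1 y d hd
    have eM := master' hp hs hgm hgp hI x y (ρ := d) (r := d) (r' := d) hd
      (by linarith) le_rfl (by linarith) le_rfl le_rfl
    have eM' : |avg g x d - avg g y d| ≤ C0 N s p * Itr * d ^ α := eM
    have e2' : |avg g y d - ut y| ≤ C3 * Itr * d ^ α := by
      rw [abs_sub_comm]; exact e2
    calc |ut x - ut y|
        ≤ |ut x - avg g x d| + |avg g x d - ut y| := abs_sub_le _ _ _
      _ ≤ |ut x - avg g x d| + (|avg g x d - avg g y d| + |avg g y d - ut y|) := by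
          gcongr
          exact abs_sub_le _ _ _
      _ ≤ C3 * Itr * d ^ α + (C0 N s p * Itr * d ^ α + C3 * Itr * d ^ α) :=
          add_le_add e1 (add_le_add eM' e2')
      _ = (2*C3 + C0 N s p) * Itr * d ^ α := by ring
  -- continuity
  have hcont : Continuous ut := by
    rw [continuous_iff_continuousAt]
    intro x
    rw [ContinuousAt, tendsto_iff_dist_tendsto_zero]
    have hb : ∀ y : Euc N, dist (ut y) (ut x) ≤ (2*C3 + C0 N s p) * Itr * (dist y x) ^ α := by
      intro y
      by_cases hyx : y = x
      · subst hyx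
        simp [Real.zero_rpow hα.ne']
      · rw [Real.dist_eq]
        exact E3 y x hyx
    have hdist : Tendsto (fun y : Euc N => dist y x) (𝓝 x) (𝓝 0) := by
      have := (continuous_id.dist (continuous_const : Continuous fun _ : Euc N => x)).tendsto x
      simpa using this
    have hrpow : Tendsto (fun y : Euc N => (2*C3 + C0 N s p) * Itr * (dist y x) ^ α)
        (𝓝 x) (𝓝 0) := by
      have h1 : Tendsto (fun t : ℝ => t ^ α) (𝓝 0) (𝓝 0) := by
        have := (Real.continuousAt_rpow_const 0 α (Or.inr hα.le)).tendsto
        simpa [Real.zero_rpow hα.ne'] using this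
      have := (h1.comp hdist).const_mul ((2*C3 + C0 N s p) * Itr)
      simpa using this
    exact squeeze_zero (fun _ => dist_nonneg) hb hrpow
  -- a.e. equality
  have haeq : ut =ᵐ[volume] u := by
    have hloc : LocallyIntegrable g volume :=
      hgp.locallyIntegrable (ENNReal.one_le_ofReal.mpr hp)
    have hae := IsUnifLocDoublingMeasure.ae_tendsto_average (μ := (volume : Measure (Euc N)))
      hloc 1
    filter_upwards [hae, hug] with x hx hux
    have hδ : Tendsto (fun j : ℕ => ((1/2:ℝ))^j) atTop (𝓝[>] 0) := by
      rw [tendsto_nhdsWithin_iff]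
      exact ⟨hrad0, Filter.Eventually.of_forall fun j => hradpos j⟩
    have hx' := hx (fun _ => x) (fun j => (1/2)^j) hδ
      (Filter.Eventually.of_forall fun j => by
        rw [one_mul]; exact mem_closedBall_self (hradpos j).le)
    have havg : ∀ j : ℕ, (⨍ ξ in closedBall x ((1/2)^j), g ξ ∂volume) = avg g x ((1/2)^j) := by
      intro j
      rw [setAverage_eq, smul_eq_mul]
      rfl
    simp_rw [havg] at hx'
    have : ut x = g x := tendsto_nhds_unique (hlim x) hx'
    rw [this, hux]
  refine ⟨ut, hcont, haeq, ?_⟩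
  intro x hx y hy hne
  have := E3 x y hne
  rw [dist_eq_norm] at this
  have hsemi : (gagSemi N s p u).toReal = Itr := by
    rw [gagSemi, ← hgg, hItr_def]
  rw [hsemi]
  exact this
end Main
end
end

section
/- Let E be a real Banach space and let A ⊆ E be a nonempty compact symmetric set (A = −A) with 0 ∉ A. Then there exists a symmetric open neighborhood N of A (N = −N, A ⊆ N) with 0 ∉ closure(N) such that γ(closure(N)) = γ(A), i.e. the Krasnoselskii genus of the closure of N equals the genus of A. -/
open Filter Topology

noncomputable section

/-- The Krasnoselskii genus of a set `A` in a topological vector-like space: the least `m`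
such that there is a continuous odd map `A → ℝ^m ∖ {0}`, and `∞` (`⊤`) if no such `m` exists. -/
def genus {E : Type*} [TopologicalSpace E] [Neg E] (A : Set E) : ℕ∞ :=
  sInf ((fun m : ℕ => (m : ℕ∞)) ''
    {m : ℕ | ∃ φ : E → (Fin m → ℝ), ContinuousOn φ A ∧
      (∀ x ∈ A, φ (-x) = -φ x) ∧ ∀ x ∈ A, φ x ≠ 0})

theorem genus_mono {E : Type*} [TopologicalSpace E] [Neg E] {A B : Set E} (h : A ⊆ B) :
    genus A ≤ genus B := by
  apply sInf_le_sInf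
  rintro x ⟨m, ⟨φ, hcont, hodd, hne⟩, rfl⟩
  exact ⟨m, ⟨φ, hcont.mono h, fun x hx => hodd x (h hx), fun x hx => hne x (h hx)⟩, rfl⟩

/-- For a nonempty compact symmetric set `A` with `0 ∉ A` in a real Banach
space, there is a symmetric open neighborhood `U` of `A` with `0 ∉ closure U` whose closure has
the same Krasnoselskii genus as `A`. -/
theorem genus_of_neighborhood {E : Type*} [NormedAddCommGroup E] [NormedSpace ℝ E]
    [CompleteSpace E] (A : Set E) (hne : A.Nonempty) (hc : IsCompact A)
    (hsym : -A = A) (h0 : (0 : E) ∉ A) :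
    ∃ U : Set E, IsOpen U ∧ A ⊆ U ∧ -U = U ∧ (0 : E) ∉ closure U ∧
      genus (closure U) = genus A := by
  -- distance from 0 to A is positive
  have hAclosed : IsClosed A := hc.isClosed
  obtain ⟨a0, ha0, ha0min⟩ := hc.exists_isMinOn hne continuous_norm.continuousOn
  set δ : ℝ := ‖a0‖ with hδdef
  have hδpos : 0 < δ := by
    rw [norm_pos_iff]
    rintro rfl; exact h0 ha0
  set V : Set E := {x | δ / 2 < ‖x‖} with hVdef
  have hVopen : IsOpen V := isOpen_lt continuous_const continuous_norm
  have hAV : A ⊆ V := fun x hx => by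
    have := ha0min hx
    simp only [hVdef, Set.mem_setOf_eq]
    calc δ / 2 < δ := by linarith
    _ ≤ ‖x‖ := this
  have hVsym : -V = V := by
    ext x; simp [hVdef]
  have h0V : (0 : E) ∉ closure V := fun h => by
    have := closure_lt_subset_le continuous_const continuous_norm h
    simp only [Set.mem_setOf_eq, norm_zero] at this
    linarith
  by_cases htop : genus A = ⊤
  · refine ⟨V, hVopen, hAV, hVsym, h0V, ?_⟩
    have h1 : genus A ≤ genus (closure V) :=
      genus_mono (hAV.trans subset_closure)
    rw [htop] at h1 ⊢
    exact top_le_iff.mp h1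
  · -- genus A is attained by some m
    have hSne : ((fun m : ℕ => (m : ℕ∞)) ''
        {m : ℕ | ∃ φ : E → (Fin m → ℝ), ContinuousOn φ A ∧
          (∀ x ∈ A, φ (-x) = -φ x) ∧ ∀ x ∈ A, φ x ≠ 0}).Nonempty := by
      by_contra h
      rw [Set.not_nonempty_iff_eq_empty] at h
      exact htop (by rw [genus, h, sInf_empty])
    have hmem := csInf_mem hSne
    rw [show sInf _ = genus A from rfl] at hmem
    obtain ⟨m, ⟨φ, hφcont, hφodd, hφne⟩, hm⟩ := hmem
    -- Tietze extension of φ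
    have hfA : Continuous (A.restrict φ) := hφcont.restrict
    obtain ⟨g, hg⟩ := ContinuousMap.exists_restrict_eq (Y := Fin m → ℝ) hAclosed
      ⟨A.restrict φ, hfA⟩
    have hgA : ∀ x ∈ A, g x = φ x := by
      intro x hx
      have := congrFun (congrArg ContinuousMap.toFun hg) ⟨x, hx⟩
      exact this
    -- symmetrize
    set ψ : E → (Fin m → ℝ) := fun x => (2 : ℝ)⁻¹ • (g x - g (-x)) with hψdef
    have hψcont : Continuous ψ := by
      rw [hψdef]; fun_prop
    have hψodd : ∀ x : E, ψ (-x) = -ψ x := by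
      intro x
      simp only [hψdef, neg_neg]
      rw [← smul_neg, neg_sub]
    have hψA : ∀ x ∈ A, ψ x = φ x := by
      intro x hx
      have hxneg : -x ∈ A := by rw [← hsym]; simpa using hx
      simp only [hψdef, hgA x hx, hgA (-x) hxneg, hφodd x hx, sub_neg_eq_add]
      rw [← two_smul ℝ (φ x), smul_smul]
      norm_num
    -- minimum of ‖ψ‖ on A is positive
    obtain ⟨b0, hb0, hb0min⟩ := hc.exists_isMinOn hne
      ((continuous_norm.comp hψcont).continuousOn)
    set ε : ℝ := ‖ψ b0‖ with hεdef
    have hεpos : 0 < ε := by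
      rw [hεdef, norm_pos_iff, hψA b0 hb0]
      exact hφne b0 hb0
    set W : Set E := {x | ε / 2 < ‖ψ x‖} with hWdef
    have hWopen : IsOpen W := isOpen_lt continuous_const (continuous_norm.comp hψcont)
    have hAW : A ⊆ W := fun x hx => by
      have := hb0min hx
      simp only [hWdef, Set.mem_setOf_eq]
      calc ε / 2 < ε := by linarith
      _ ≤ ‖ψ x‖ := this
    have hWsym : -W = W := by
      ext x
      simp only [Set.mem_neg, hWdef, Set.mem_setOf_eq, hψodd, norm_neg]
    have hclW : closure W ⊆ {x | ε / 2 ≤ ‖ψ x‖} :=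
      closure_lt_subset_le continuous_const (continuous_norm.comp hψcont)
    refine ⟨W ∩ V, hWopen.inter hVopen, Set.subset_inter hAW hAV, ?_, ?_, ?_⟩
    · rw [Set.inter_neg, hWsym, hVsym]
    · intro h
      exact h0V (closure_mono Set.inter_subset_right h)
    · refine le_antisymm ?_ (genus_mono ((Set.subset_inter hAW hAV).trans subset_closure))
      rw [← hm]
      apply sInf_le
      refine ⟨m, ⟨ψ, hψcont.continuousOn, fun x _ => hψodd x, ?_⟩, rfl⟩
      intro x hx
      have hxW : x ∈ closure W := closure_mono Set.inter_subset_left hx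
      have := hclW hxW
      simp only [Set.mem_setOf_eq] at this
      intro hzero
      rw [hzero, norm_zero] at this
      linarith
end
end

section
/- Let Ω ⊆ ℝ^N be a bounded open set, α ∈ (0,1), and p ∈ [1,∞) with αp > N. If v ∈ C^α_0(Ω) (v is continuous on ℝ^N, vanishes outside Ω, and ‖D^α v‖_{L^∞(ℝ^N×ℝ^N)} < ∞), then D^α v ∈ L^p(ℝ^N×ℝ^N), and there is a constant C depending only on N, α, p and Ω such that ‖D^α v‖_{L^p(ℝ^N×ℝ^N)} ≤ C ‖D^α v‖_{L^∞(ℝ^N×ℝ^N)}. -/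
open MeasureTheory ENNReal Filter Topology

noncomputable section

/-- The `L^∞` norm (supremum) of the Hölder quotient `D^α v(x,y) = (v x - v y)/|x-y|^α`. -/
def holderSemi (N : ℕ) (α : ℝ) (v : Euc N → ℝ) : ℝ≥0∞ :=
  ⨆ (x : Euc N) (y : Euc N) (_ : x ≠ y), ENNReal.ofReal (|v x - v y| / ‖x - y‖ ^ α)

/-- The `L^p(ℝ^N×ℝ^N)` norm of the Hölder quotient `D^α v`. -/
def holderLp (N : ℕ) (α p : ℝ) (v : Euc N → ℝ) : ℝ≥0∞ :=
  (∫⁻ q : Euc N × Euc N,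
    ENNReal.ofReal (|v q.1 - v q.2| ^ p / ‖q.1 - q.2‖ ^ (α * p)) ∂volume) ^ (1 / p)

/-- Membership in `C_0(Ω)`: continuous on `ℝ^N` and vanishing outside `Ω`. -/
def memC0 (N : ℕ) (Ω : Set (Euc N)) (v : Euc N → ℝ) : Prop :=
  Continuous v ∧ ∀ x ∉ Ω, v x = 0

/-- Membership in `C^α_0(Ω)`: continuous, vanishing outside `Ω`, with finite `α`-Hölder
seminorm `‖D^α v‖_{L^∞(ℝ^N×ℝ^N)}`. -/
def memCalpha0 (N : ℕ) (α : ℝ) (Ω : Set (Euc N)) (v : Euc N → ℝ) : Prop :=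
  memC0 N Ω v ∧ holderSemi N α v < ⊤

lemma slice_fst (N : ℕ) {B : Set (Euc N)} (hB : MeasurableSet B)
    {G : Euc N → ℝ≥0∞} (hG : Measurable G) :
    ∫⁻ q : Euc N × Euc N, B.indicator 1 q.1 * G (q.1 - q.2) ∂volume
      = volume B * ∫⁻ z, G z ∂volume := by
  have hmeas : Measurable fun q : Euc N × Euc N =>
      B.indicator (1 : Euc N → ℝ≥0∞) q.1 * G (q.1 - q.2) :=
    ((measurable_one.indicator hB).comp measurable_fst).mul
      (hG.comp (measurable_fst.sub measurable_snd))
  rw [Measure.volume_eq_prod, lintegral_prod _ hmeas.aemeasurable]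
  have h1 : ∀ x : Euc N, ∫⁻ y, G (x - y) ∂volume = ∫⁻ z, G z ∂volume := fun x =>
    (Measure.measurePreserving_sub_left volume x).lintegral_comp hG
  calc ∫⁻ x, ∫⁻ y, B.indicator 1 x * G (x - y) ∂volume ∂volume
      = ∫⁻ x, B.indicator 1 x * ∫⁻ y, G (x - y) ∂volume ∂volume :=
        lintegral_congr fun x =>
          lintegral_const_mul _ (hG.comp (measurable_const.sub measurable_id))
    _ = ∫⁻ x, B.indicator 1 x * ∫⁻ z, G z ∂volume ∂volume := by simp_rw [h1]
    _ = (∫⁻ x, B.indicator 1 x ∂volume) * ∫⁻ z, G z ∂volume :=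
        lintegral_mul_const _ (measurable_one.indicator hB)
    _ = volume B * ∫⁻ z, G z ∂volume := by rw [lintegral_indicator_one hB]

lemma slice_snd (N : ℕ) {B : Set (Euc N)} (hB : MeasurableSet B)
    {G : Euc N → ℝ≥0∞} (hG : Measurable G) :
    ∫⁻ q : Euc N × Euc N, B.indicator 1 q.2 * G (q.1 - q.2) ∂volume
      = volume B * ∫⁻ z, G z ∂volume := by
  have hmeas : Measurable fun q : Euc N × Euc N =>
      B.indicator (1 : Euc N → ℝ≥0∞) q.2 * G (q.1 - q.2) :=
    ((measurable_one.indicator hB).comp measurable_snd).mul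
      (hG.comp (measurable_fst.sub measurable_snd))
  rw [Measure.volume_eq_prod, lintegral_prod_symm _ hmeas.aemeasurable]
  have h1 : ∀ y : Euc N, ∫⁻ x, G (x - y) ∂volume = ∫⁻ z, G z ∂volume := fun y =>
    (measurePreserving_sub_right volume y).lintegral_comp hG
  calc ∫⁻ y, ∫⁻ x, B.indicator 1 y * G (x - y) ∂volume ∂volume
      = ∫⁻ y, B.indicator 1 y * ∫⁻ x, G (x - y) ∂volume ∂volume :=
        lintegral_congr fun y =>
          lintegral_const_mul _ (hG.comp (measurable_id.sub measurable_const))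
    _ = ∫⁻ y, B.indicator 1 y * ∫⁻ z, G z ∂volume ∂volume := by simp_rw [h1]
    _ = (∫⁻ y, B.indicator 1 y ∂volume) * ∫⁻ z, G z ∂volume :=
        lintegral_mul_const _ (measurable_one.indicator hB)
    _ = volume B * ∫⁻ z, G z ∂volume := by rw [lintegral_indicator_one hB]


/-- If `αp > N` and `v ∈ C^α_0(Ω)` with `Ω` bounded open, then
`D^α v ∈ L^p(ℝ^N×ℝ^N)` and `‖D^α v‖_{L^p} ≤ C ‖D^α v‖_{L^∞}` with `C = C(N,α,p,Ω)`. -/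
theorem holder_quotient_Lp_bound (N : ℕ) (Ω : Set (Euc N)) (hΩo : IsOpen Ω)
    (hΩb : Bornology.IsBounded Ω) (α p : ℝ) (hα : 0 < α) (hα1 : α < 1)
    (hp : 1 ≤ p) (hαp : (N : ℝ) < α * p) :
    ∃ C : ℝ, 0 < C ∧ ∀ v : Euc N → ℝ, memCalpha0 N α Ω v →
      holderLp N α p v < ⊤ ∧
      holderLp N α p v ≤ ENNReal.ofReal C * holderSemi N α v := by
  have hp0 : 0 < p := lt_of_lt_of_le one_pos hp
  have hαp0 : 0 < α * p := mul_pos hα hp0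
  rcases Nat.eq_zero_or_pos N with hN | hN
  · subst hN
    refine ⟨1, one_pos, fun v _ => ?_⟩
    have h0 : holderLp 0 α p v = 0 := by
      unfold holderLp
      have hz : (∫⁻ q : Euc 0 × Euc 0,
          ENNReal.ofReal (|v q.1 - v q.2| ^ p / ‖q.1 - q.2‖ ^ (α * p)) ∂volume)
          = ∫⁻ _ : Euc 0 × Euc 0, 0 ∂volume :=
        lintegral_congr fun q => by
          rw [Subsingleton.elim q.1 q.2]
          simp [Real.zero_rpow hp0.ne']
      rw [hz, lintegral_zero, ENNReal.zero_rpow_of_pos (by positivity)]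
    rw [h0]
    exact ⟨zero_lt_top, zero_le⟩
  -- main case N ≥ 1
  obtain ⟨r, hr⟩ := hΩb.subset_closedBall 0
  set R : ℝ := max (r + 1) 1 with hRdef
  have hR1 : (1:ℝ) ≤ R := le_max_right _ _
  have hR0 : (0:ℝ) < R := lt_of_lt_of_le one_pos hR1
  set B : Set (Euc N) := Metric.ball (0 : Euc N) R with hBdef
  have hΩB : Ω ⊆ B := by
    intro x hx
    have := hr hx
    rw [Metric.mem_closedBall] at this
    rw [hBdef, Metric.mem_ball]
    calc dist x 0 ≤ r := this
      _ < r + 1 := by linarith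
      _ ≤ R := le_max_left _ _
  set c : ℝ := (4 * R) ^ (α * p) with hcdef
  have hc0 : 0 < c := Real.rpow_pos_of_pos (by linarith) _
  set G : Euc N → ℝ≥0∞ := fun z => ENNReal.ofReal (c * (1 + ‖z‖) ^ (-(α * p))) with hGdef
  have hGmeas : Measurable G := by fun_prop
  set J : ℝ≥0∞ := ∫⁻ z : Euc N, ENNReal.ofReal ((1 + ‖z‖) ^ (-(α * p))) ∂volume with hJdef
  have hJ : J < ⊤ := by
    apply finite_integral_one_add_norm
    simpa using hαp
  have hGint : ∫⁻ z, G z ∂volume = ENNReal.ofReal c * J := by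
    rw [hGdef, hJdef]
    simp_rw [ENNReal.ofReal_mul hc0.le]
    exact lintegral_const_mul' _ _ ENNReal.ofReal_ne_top
  set D : ℝ≥0∞ := 2 * volume B * (ENNReal.ofReal c * J) with hDdef
  have hD : D < ⊤ := by
    rw [hDdef]
    exact ENNReal.mul_lt_top
      (ENNReal.mul_lt_top (by simp) measure_ball_lt_top)
      (ENNReal.mul_lt_top ENNReal.ofReal_lt_top hJ)
  have hDp : D ^ (1 / p) ≠ ⊤ := ENNReal.rpow_ne_top_of_nonneg (by positivity) hD.ne
  refine ⟨(D ^ (1 / p)).toReal + 1, by positivity, fun v hv => ?_⟩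
  obtain ⟨⟨hvc, hv0⟩, hS⟩ := hv
  set M : ℝ := (holderSemi N α v).toReal with hMdef
  have hM0 : 0 ≤ M := ENNReal.toReal_nonneg
  have hMeq : ENNReal.ofReal M = holderSemi N α v := ENNReal.ofReal_toReal hS.ne
  -- Hölder bound
  have hHold : ∀ x y : Euc N, |v x - v y| ≤ M * ‖x - y‖ ^ α := by
    intro x y
    rcases eq_or_ne x y with h | h
    · simp [h, Real.zero_rpow hα.ne']
    · have h1 : ENNReal.ofReal (|v x - v y| / ‖x - y‖ ^ α) ≤ holderSemi N α v :=
        le_iSup_of_le x (le_iSup_of_le y (le_iSup_of_le h le_rfl))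
      have h2 : |v x - v y| / ‖x - y‖ ^ α ≤ M := by
        have h3 := ENNReal.toReal_mono hS.ne h1
        rwa [ENNReal.toReal_ofReal (by positivity)] at h3
      have hxy : (0:ℝ) < ‖x - y‖ ^ α := by
        have h4 : 0 < ‖x - y‖ := by rwa [norm_pos_iff, sub_ne_zero]
        positivity
      calc |v x - v y| = |v x - v y| / ‖x - y‖ ^ α * ‖x - y‖ ^ α := by field_simp
        _ ≤ M * ‖x - y‖ ^ α := mul_le_mul_of_nonneg_right h2 hxy.le
  have hv0B : ∀ x ∉ B, v x = 0 := fun x hx => hv0 x fun h => hx (hΩB h)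
  -- sup bound inside B
  have hvB : ∀ x ∈ B, |v x| ≤ M * (2 * R) ^ α := by
    intro x hx
    set z : Euc N := x + (2 * R) • (EuclideanSpace.single (⟨0, hN⟩ : Fin N) (1:ℝ)) with hzdef
    have hnormsingle : ‖EuclideanSpace.single (⟨0, hN⟩ : Fin N) (1:ℝ)‖ = 1 := by
      rw [EuclideanSpace.norm_single]; norm_num
    have hz_norm : ‖x - z‖ = 2 * R := by
      have : x - z = -((2 * R) • (EuclideanSpace.single (⟨0, hN⟩ : Fin N) (1:ℝ))) := by
        rw [hzdef]; abel
      rw [this, norm_neg, norm_smul, hnormsingle, mul_one, Real.norm_eq_abs,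
        abs_of_pos (by linarith)]
    have hxR : ‖x‖ < R := by rwa [hBdef, Metric.mem_ball, dist_zero_right] at hx
    have hz_out : z ∉ B := by
      intro hz
      have hzR : ‖z‖ < R := by rwa [hBdef, Metric.mem_ball, dist_zero_right] at hz
      have h5 : ‖x - z‖ ≤ ‖x‖ + ‖z‖ := norm_sub_le x z
      rw [hz_norm] at h5
      linarith
    have h6 := hHold x z
    rw [hv0B z hz_out, sub_zero, hz_norm] at h6
    exact h6
  -- pointwise key bound
  have hkey : ∀ q : Euc N × Euc N,
      ENNReal.ofReal (|v q.1 - v q.2| ^ p / ‖q.1 - q.2‖ ^ (α * p))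
        ≤ ENNReal.ofReal (M ^ p) *
          ((B.indicator 1 q.1 + B.indicator 1 q.2) * G (q.1 - q.2)) := by
    rintro ⟨x, y⟩
    by_cases hxy : x ∈ B ∨ y ∈ B
    · have hreal : |v x - v y| ^ p / ‖x - y‖ ^ (α * p)
          ≤ M ^ p * (c * (1 + ‖x - y‖) ^ (-(α * p))) := by
        set t : ℝ := ‖x - y‖ with htdef
        have ht0 : 0 ≤ t := norm_nonneg _
        rcases le_or_gt t (2 * R) with hcase | hcase
        · -- near regime
          have hF : |v x - v y| ^ p / t ^ (α * p) ≤ M ^ p := by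
            rcases eq_or_lt_of_le ht0 with h0 | h0
            · have hx_eq : x = y := by
                rw [← sub_eq_zero, ← norm_eq_zero]; exact h0.symm
              simp [hx_eq, Real.zero_rpow hp0.ne', Real.rpow_nonneg hM0]
            · rw [div_le_iff₀ (by positivity)]
              calc |v x - v y| ^ p ≤ (M * t ^ α) ^ p :=
                    Real.rpow_le_rpow (abs_nonneg _) (hHold x y) hp0.le
                _ = M ^ p * (t ^ α) ^ p := Real.mul_rpow hM0 (Real.rpow_nonneg ht0 _)
                _ = M ^ p * t ^ (α * p) := by rw [← Real.rpow_mul ht0]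
          have hone : 1 ≤ c * (1 + t) ^ (-(α * p)) := by
            rw [Real.rpow_neg (by positivity), ← div_eq_mul_inv, le_div_iff₀ (by positivity),
              one_mul]
            exact Real.rpow_le_rpow (by positivity) (by linarith) hαp0.le
          calc |v x - v y| ^ p / t ^ (α * p) ≤ M ^ p := hF
            _ ≤ M ^ p * (c * (1 + t) ^ (-(α * p))) :=
              le_mul_of_one_le_right (by positivity) hone
        · -- far regime : t > 2R, one point outside B
          have ht1 : (1:ℝ) ≤ t := by linarith
          have ht0' : (0:ℝ) < t := by linarith
          have hsub : |v x - v y| ≤ M * (2 * R) ^ α := by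
            by_cases hx : x ∈ B
            · have hy' : y ∉ B := by
                intro hy
                have hxR : ‖x‖ < R := by rwa [hBdef, Metric.mem_ball, dist_zero_right] at hx
                have hyR : ‖y‖ < R := by rwa [hBdef, Metric.mem_ball, dist_zero_right] at hy
                have : t ≤ ‖x‖ + ‖y‖ := norm_sub_le x y
                linarith
              rw [hv0B y hy', sub_zero]
              exact hvB x hx
            · have hy : y ∈ B := hxy.resolve_left hx
              rw [hv0B x hx, zero_sub, abs_neg]
              exact hvB y hy
          have hnum : |v x - v y| ^ p ≤ M ^ p * (2 * R) ^ (α * p) := by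
            calc |v x - v y| ^ p ≤ (M * (2 * R) ^ α) ^ p :=
                  Real.rpow_le_rpow (abs_nonneg _) hsub hp0.le
              _ = M ^ p * ((2 * R) ^ α) ^ p :=
                  Real.mul_rpow hM0 (Real.rpow_nonneg (by linarith) _)
              _ = M ^ p * (2 * R) ^ (α * p) := by rw [← Real.rpow_mul (by linarith)]
          have hdecay : (2 * R) ^ (α * p) / t ^ (α * p) ≤ c * (1 + t) ^ (-(α * p)) := by
            rw [Real.rpow_neg (by positivity), ← div_eq_mul_inv,
              div_le_div_iff₀ (by positivity) (by positivity), hcdef,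
              ← Real.mul_rpow (by positivity) (by positivity),
              ← Real.mul_rpow (by positivity) (by positivity)]
            exact Real.rpow_le_rpow (by positivity) (by nlinarith) hαp0.le
          calc |v x - v y| ^ p / t ^ (α * p)
              ≤ (M ^ p * (2 * R) ^ (α * p)) / t ^ (α * p) := by
                apply div_le_div_of_nonneg_right ?_ (by positivity)
                · exact hnum
            _ = M ^ p * ((2 * R) ^ (α * p) / t ^ (α * p)) := by ring
            _ ≤ M ^ p * (c * (1 + t) ^ (-(α * p))) :=
                mul_le_mul_of_nonneg_left hdecay (by positivity)
      have hind : (1:ℝ≥0∞) ≤ B.indicator 1 x + B.indicator 1 y := by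
        rcases hxy with hx | hy
        · rw [Set.indicator_of_mem hx]; exact le_add_right le_rfl
        · rw [Set.indicator_of_mem hy]; exact le_add_left le_rfl
      calc ENNReal.ofReal (|v x - v y| ^ p / ‖x - y‖ ^ (α * p))
          ≤ ENNReal.ofReal (M ^ p * (c * (1 + ‖x - y‖) ^ (-(α * p)))) :=
            ENNReal.ofReal_le_ofReal hreal
        _ = ENNReal.ofReal (M ^ p) * G (x - y) := by
            rw [ENNReal.ofReal_mul (by positivity)]
        _ ≤ ENNReal.ofReal (M ^ p) *
            ((B.indicator 1 x + B.indicator 1 y) * G (x - y)) := by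
            apply mul_le_mul_right
            nth_rewrite 1 [← one_mul (G (x - y))]
            exact mul_le_mul_left hind _
    · push_neg at hxy
      rw [hv0B x hxy.1, hv0B y hxy.2]
      simp [Real.zero_rpow hp0.ne']
  -- the integral bound
  have hbound : (∫⁻ q : Euc N × Euc N,
      ENNReal.ofReal (|v q.1 - v q.2| ^ p / ‖q.1 - q.2‖ ^ (α * p)) ∂volume)
        ≤ ENNReal.ofReal (M ^ p) * D := by
    have hBmeas : MeasurableSet B := Metric.isOpen_ball.measurableSet
    calc (∫⁻ q : Euc N × Euc N,
        ENNReal.ofReal (|v q.1 - v q.2| ^ p / ‖q.1 - q.2‖ ^ (α * p)) ∂volume)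
        ≤ ∫⁻ q : Euc N × Euc N, ENNReal.ofReal (M ^ p) *
            ((B.indicator 1 q.1 + B.indicator 1 q.2) * G (q.1 - q.2)) ∂volume :=
          lintegral_mono hkey
      _ = ENNReal.ofReal (M ^ p) * ∫⁻ q : Euc N × Euc N,
            (B.indicator 1 q.1 + B.indicator 1 q.2) * G (q.1 - q.2) ∂volume :=
          lintegral_const_mul' _ _ ENNReal.ofReal_ne_top
      _ = ENNReal.ofReal (M ^ p) *
            ((∫⁻ q : Euc N × Euc N, B.indicator 1 q.1 * G (q.1 - q.2) ∂volume) +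
             (∫⁻ q : Euc N × Euc N, B.indicator 1 q.2 * G (q.1 - q.2) ∂volume)) := by
          congr 1
          simp_rw [add_mul]
          exact lintegral_add_left (((measurable_one.indicator hBmeas).comp
            measurable_fst).mul (hGmeas.comp (measurable_fst.sub measurable_snd))) _
      _ = ENNReal.ofReal (M ^ p) *
            (volume B * ∫⁻ z, G z ∂volume + volume B * ∫⁻ z, G z ∂volume) := by
          rw [slice_fst N hBmeas hGmeas, slice_snd N hBmeas hGmeas]
      _ = ENNReal.ofReal (M ^ p) * D := by
          rw [hGint, hDdef]; ring
  have h1p : (0:ℝ) ≤ 1 / p := by positivity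
  have hLp : holderLp N α p v ≤ ENNReal.ofReal M * D ^ (1 / p) := by
    unfold holderLp
    calc (∫⁻ q : Euc N × Euc N,
        ENNReal.ofReal (|v q.1 - v q.2| ^ p / ‖q.1 - q.2‖ ^ (α * p)) ∂volume) ^ (1 / p)
        ≤ (ENNReal.ofReal (M ^ p) * D) ^ (1 / p) :=
          ENNReal.rpow_le_rpow hbound h1p
      _ = (ENNReal.ofReal (M ^ p)) ^ (1 / p) * D ^ (1 / p) :=
          ENNReal.mul_rpow_of_nonneg _ _ h1p
      _ = ENNReal.ofReal M * D ^ (1 / p) := by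
          rw [← ENNReal.ofReal_rpow_of_nonneg hM0 hp0.le, ← ENNReal.rpow_mul,
            mul_one_div_cancel hp0.ne', ENNReal.rpow_one]
  constructor
  · exact lt_of_le_of_lt hLp
      (ENNReal.mul_lt_top ENNReal.ofReal_lt_top (lt_top_iff_ne_top.mpr hDp))
  · calc holderLp N α p v ≤ ENNReal.ofReal M * D ^ (1 / p) := hLp
      _ = D ^ (1 / p) * ENNReal.ofReal M := mul_comm _ _
      _ ≤ ENNReal.ofReal ((D ^ (1 / p)).toReal + 1) * holderSemi N α v := by
          apply mul_le_mul'
          · conv_lhs => rw [← ENNReal.ofReal_toReal hDp]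
            exact ENNReal.ofReal_le_ofReal (by linarith)
          · rw [hMeq]
end
end

section
/- Let α ∈ (0,1), let p_n → ∞ be a sequence in [1,∞), and let v_n, v : ℝ^N → ℝ be continuous functions with v_n → v uniformly on ℝ^N. Then ‖D^α v‖_{L^∞(ℝ^N×ℝ^N)} ≤ liminf_{n→∞} ‖D^α v_n‖_{L^{p_n}(ℝ^N×ℝ^N)} (where both sides may be infinite). -/
open MeasureTheory ENNReal Filter Topology

noncomputable section

/-- Liminf inequality for Hölder quotients: if `pₙ → ∞` and `vₙ → v`
uniformly (all continuous), then `‖D^α v‖_{L^∞} ≤ liminf ‖D^α vₙ‖_{L^{pₙ}}`. -/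
theorem holder_liminf (N : ℕ) (α : ℝ) (hα : 0 < α) (hα1 : α < 1)
    (pn : ℕ → ℝ) (hpn : ∀ n, 1 ≤ pn n) (hpinf : Tendsto pn atTop atTop)
    (vn : ℕ → Euc N → ℝ) (v : Euc N → ℝ)
    (hvn : ∀ n, Continuous (vn n)) (hv : Continuous v)
    (hunif : TendstoUniformly vn v atTop) :
    holderSemi N α v ≤ Filter.liminf (fun n => holderLp N α (pn n) (vn n)) atTop := by
  refine iSup_le fun x => iSup_le fun y => iSup_le fun hxy => ?_
  refine ENNReal.le_of_forall_pos_le_add fun ε hε _ => ?_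
  have hδ : (0:ℝ) < (ε:ℝ) := hε
  set δ : ℝ := (ε : ℝ) with hδdef
  set A : ℝ := |v x - v y| with hA
  set d : ℝ := ‖x - y‖ with hdd
  have hd : 0 < d := by
    rw [hdd]; exact norm_pos_iff.mpr (sub_ne_zero.mpr hxy)
  set M : ℝ := A / d ^ α with hMdef
  have key : ENNReal.ofReal (M - δ) ≤
      Filter.liminf (fun n => holderLp N α (pn n) (vn n)) atTop := by
    rcases le_or_gt (M - δ) 0 with hM0 | hm
    · simp [ENNReal.ofReal_eq_zero.mpr hM0]
    set m : ℝ := M - δ with hmdef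
    -- choose a radius r
    have hφ0 : (fun r : ℝ => (A - 4*r) / (d + 2*r) ^ α) 0 = M := by
      norm_num [hMdef]
    have hcont : ContinuousAt (fun r : ℝ => (A - 4*r) / (d + 2*r) ^ α) 0 := by
      have hin : ContinuousAt (fun r : ℝ => d + 2*r) 0 := by fun_prop
      have hpow : ContinuousAt (fun r : ℝ => (d + 2*r) ^ α) 0 :=
        hin.rpow_const (Or.inr hα.le)
      exact (ContinuousAt.div (by fun_prop) hpow
        (by norm_num; exact (Real.rpow_pos_of_pos hd α).ne'))
    have hev : ∀ᶠ r in 𝓝 (0:ℝ),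
        (m < (A - 4*r) / (d + 2*r) ^ α ∧ r < d/4) := by
      refine Filter.Eventually.and ?_ (eventually_lt_nhds (by linarith))
      have hlt : m < (fun r : ℝ => (A - 4*r) / (d + 2*r) ^ α) 0 := by
        rw [hφ0]; simp only [hmdef]; linarith
      exact hcont.eventually (eventually_gt_nhds hlt)
    obtain ⟨u, hu, hball⟩ := Metric.eventually_nhds_iff.mp hev
    set r : ℝ := u/2 with hrdef
    have hr0 : 0 < r := by positivity
    obtain ⟨hq, hr4⟩ : m < (A - 4*r) / (d + 2*r) ^ α ∧ r < d/4 := by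
      apply hball
      rw [Real.dist_eq, sub_zero, abs_of_pos hr0]
      linarith
    set q : ℝ := (A - 4*r) / (d + 2*r) ^ α with hqdef
    have hdr2 : (0:ℝ) < d + 2*r := by linarith
    have hden : 0 < (d + 2*r) ^ α := Real.rpow_pos_of_pos hdr2 α
    have hA4 : 0 < A - 4*r := by
      have h := mul_pos (hm.trans hq) hden
      rwa [hqdef, div_mul_cancel₀ _ hden.ne'] at h
    -- continuity moduli
    obtain ⟨r1, hr1, hx1⟩ := Metric.continuousAt_iff.mp (hv.continuousAt (x := x)) r hr0
    obtain ⟨r2, hr2, hy1⟩ := Metric.continuousAt_iff.mp (hv.continuousAt (x := y)) r hr0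
    set s : ℝ := min r (min r1 r2) with hsdef
    have hs0 : 0 < s := lt_min hr0 (lt_min hr1 hr2)
    have hsr : s ≤ r := min_le_left _ _
    have hsr1 : s ≤ r1 := (min_le_right _ _).trans (min_le_left _ _)
    have hsr2 : s ≤ r2 := (min_le_right _ _).trans (min_le_right _ _)
    set c : ℝ≥0∞ := volume (Metric.ball x s) * volume (Metric.ball y s) with hcdef
    have hc0 : c ≠ 0 :=
      mul_ne_zero ((Metric.measure_ball_pos _ _ hs0).ne') ((Metric.measure_ball_pos _ _ hs0).ne')
    have hctop : c ≠ ⊤ := ENNReal.mul_ne_top measure_ball_lt_top.ne measure_ball_lt_top.ne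
    have hmain : ∀ᶠ n in atTop,
        ENNReal.ofReal m * c ^ (1/(pn n)) ≤ holderLp N α (pn n) (vn n) := by
      filter_upwards [Metric.tendstoUniformly_iff.mp hunif r hr0] with n hn
      have hp1 : 1 ≤ pn n := hpn n
      have hp0 : 0 < pn n := by linarith
      set p : ℝ := pn n with hpdef
      have hpt : ∀ z : Euc N × Euc N,
          (Metric.ball x s ×ˢ Metric.ball y s).indicator
            (fun _ => ENNReal.ofReal (m ^ p)) z
          ≤ ENNReal.ofReal (|vn n z.1 - vn n z.2| ^ p / ‖z.1 - z.2‖ ^ (α * p)) := by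
        intro z
        by_cases hz : z ∈ Metric.ball x s ×ˢ Metric.ball y s
        · rw [Set.indicator_of_mem hz]
          obtain ⟨hz1, hz2⟩ := hz
          set x' := z.1
          set y' := z.2
          have hdx : dist x' x < s := Metric.mem_ball.mp hz1
          have hdy : dist y' y < s := Metric.mem_ball.mp hz2
          have h1 : dist (v x') (v x) < r := hx1 (lt_of_lt_of_le hdx hsr1)
          have h2 : dist (v y') (v y) < r := hy1 (lt_of_lt_of_le hdy hsr2)
          have h3 : dist (v x') (vn n x') < r := hn x'
          have h4 : dist (v y') (vn n y') < r := hn y'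
          have hnum : A - 4*r ≤ |vn n x' - vn n y'| := by
            have t1 : dist (v x) (v y) ≤
                dist (v x) (vn n x') + dist (vn n x') (vn n y') + dist (vn n y') (v y) :=
              dist_triangle4 _ _ _ _
            have t2 : dist (v x) (vn n x') ≤ dist (v x) (v x') + dist (v x') (vn n x') :=
              dist_triangle _ _ _
            have t3 : dist (vn n y') (v y) ≤ dist (vn n y') (v y') + dist (v y') (v y) :=
              dist_triangle _ _ _
            have e1 : dist (v x) (v y) = A := by rw [Real.dist_eq, hA]
            have e2 : dist (vn n x') (vn n y') = |vn n x' - vn n y'| := Real.dist_eq _ _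
            have c1 : dist (v x) (v x') < r := by rwa [dist_comm]
            have c4 : dist (vn n y') (v y') < r := by rwa [dist_comm]
            linarith
          have hble : ‖x' - y'‖ ≤ d + 2*r := by
            have t : dist x' y' ≤ dist x' x + dist x y + dist y y' := dist_triangle4 _ _ _ _
            have e1 : dist x' y' = ‖x' - y'‖ := dist_eq_norm _ _
            have e2 : dist x y = d := by rw [dist_eq_norm, hdd]
            have c2 : dist y y' < s := by rwa [dist_comm]
            linarith
          have hbpos : 0 < ‖x' - y'‖ := by
            have t : dist x y ≤ dist x x' + dist x' y' + dist y' y := dist_triangle4 _ _ _ _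
            have e1 : dist x' y' = ‖x' - y'‖ := dist_eq_norm _ _
            have e2 : dist x y = d := by rw [dist_eq_norm, hdd]
            have c1 : dist x x' < s := by rwa [dist_comm]
            linarith
          apply ENNReal.ofReal_le_ofReal
          have step1 : m ^ p ≤ q ^ p := Real.rpow_le_rpow hm.le hq.le hp0.le
          have step2 : q ^ p = (A - 4*r) ^ p / (d + 2*r) ^ (α * p) := by
            rw [hqdef, Real.div_rpow hA4.le hden.le, Real.rpow_mul hdr2.le]
          have step3 : (A - 4*r) ^ p / (d + 2*r) ^ (α * p)
              ≤ |vn n x' - vn n y'| ^ p / ‖x' - y'‖ ^ (α * p) := by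
            apply div_le_div₀ (Real.rpow_nonneg (abs_nonneg _) p)
              (Real.rpow_le_rpow hA4.le hnum hp0.le)
              (Real.rpow_pos_of_pos hbpos _)
              (Real.rpow_le_rpow (norm_nonneg _) hble (by positivity))
          calc m ^ p ≤ q ^ p := step1
            _ = _ := step2
            _ ≤ _ := step3
        · rw [Set.indicator_of_notMem hz]; exact zero_le
      have hvol : volume (Metric.ball x s ×ˢ Metric.ball y s) = c := by
        rw [hcdef, MeasureTheory.Measure.volume_eq_prod, Measure.prod_prod]
      have hint : ENNReal.ofReal (m ^ p) * c
          ≤ ∫⁻ z : Euc N × Euc N,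
              ENNReal.ofReal (|vn n z.1 - vn n z.2| ^ p / ‖z.1 - z.2‖ ^ (α * p)) ∂volume := by
        rw [← hvol, ← lintegral_indicator_const (measurableSet_ball.prod measurableSet_ball)]
        exact lintegral_mono hpt
      have hfinal : (ENNReal.ofReal (m ^ p) * c) ^ (1/p) = ENNReal.ofReal m * c ^ (1/p) := by
        rw [ENNReal.mul_rpow_of_nonneg _ _ (by positivity),
          ← ENNReal.ofReal_rpow_of_pos hm, ← ENNReal.rpow_mul,
          mul_one_div_cancel hp0.ne', ENNReal.rpow_one]
      rw [holderLp, ← hfinal]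
      exact ENNReal.rpow_le_rpow hint (by positivity)
    have htend : Tendsto (fun n => ENNReal.ofReal m * c ^ (1/(pn n))) atTop
        (𝓝 (ENNReal.ofReal m)) := by
      have h1 : Tendsto (fun n => 1/(pn n)) atTop (𝓝 0) := by
        simpa [one_div, Function.comp_def] using tendsto_inv_atTop_zero.comp hpinf
      have hct : 0 < c.toReal := ENNReal.toReal_pos hc0 hctop
      have hcrw : (fun t : ℝ => c ^ t) = fun t : ℝ => ENNReal.ofReal (c.toReal ^ t) := by
        funext t
        rw [← ENNReal.ofReal_rpow_of_pos hct, ENNReal.ofReal_toReal hctop]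
      have h2 : Tendsto (fun t : ℝ => c ^ t) (𝓝 0) (𝓝 1) := by
        rw [hcrw]
        have hr : Tendsto (fun t : ℝ => c.toReal ^ t) (𝓝 0) (𝓝 1) := by
          have := (Real.continuousAt_const_rpow (a := c.toReal) (b := 0) hct.ne').tendsto
          simpa using this
        have := (ENNReal.continuous_ofReal.continuousAt (x := (1:ℝ))).tendsto.comp hr
        simpa [Function.comp_def] using this
      have h3 : Tendsto (fun n => c ^ (1/(pn n))) atTop (𝓝 1) := h2.comp h1
      have := ENNReal.Tendsto.const_mul (b := 1) (a := ENNReal.ofReal m) h3 (Or.inl one_ne_zero)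
      simpa using this
    calc ENNReal.ofReal m
        = Filter.liminf (fun n => ENNReal.ofReal m * c ^ (1/(pn n))) atTop :=
          (htend.liminf_eq).symm
      _ ≤ Filter.liminf (fun n => holderLp N α (pn n) (vn n)) atTop :=
          Filter.liminf_le_liminf hmain
  calc ENNReal.ofReal (A / d ^ α)
      ≤ ENNReal.ofReal (M - δ) + ENNReal.ofReal δ := by
        refine le_trans (ENNReal.ofReal_le_ofReal ?_) ENNReal.ofReal_add_le
        rw [hMdef]; ring_nf; rfl
    _ ≤ Filter.liminf (fun n => holderLp N α (pn n) (vn n)) atTop + ε := by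
        rw [hδdef, ENNReal.ofReal_coe_nnreal]
        exact add_le_add_left key _
end
end

section
/- (Γ-liminf inequality for homogenization of fractional energies) Let Ω ⊆ ℝ^N be a bounded open set, 0 < s < 1, 1 < p < ∞, and 0 < α ≤ β < ∞. Let a_n, a_0 ∈ A_{α,β} with a_n → a_0 weakly* in L^∞(ℝ^N×ℝ^N), i.e. ∬ a_n g dx dy → ∬ a_0 g dx dy for every g ∈ L^1(ℝ^N×ℝ^N). Let v_n, v ∈ L^p(Ω) (extended by zero to ℝ^N) with v_n → v in L^p(Ω) and sup_n Φ_{a_n}(v_n) < ∞, where Φ_a(u) = ∬_{ℝ^N×ℝ^N} a(x,y) |u(x)−u(y)|^p / |x−y|^{N+sp} dx dy. Then v ∈ W^{s,p}_0(Ω) and Φ_{a_0}(v) ≤ liminf_{n→∞} Φ_{a_n}(v_n). -/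
open MeasureTheory ENNReal Filter Topology

noncomputable section

/-- The class `A_{α,β}` of symmetric kernels `a ∈ L^∞(ℝ^N×ℝ^N)` with `α ≤ a ≤ β` a.e. -/
def memA (N : ℕ) (α β : ℝ) (a : Euc N × Euc N → ℝ) : Prop :=
  Measurable a ∧
    (∀ᵐ q ∂(volume : Measure (Euc N × Euc N)), a (q.2, q.1) = a q) ∧
    ∀ᵐ q ∂(volume : Measure (Euc N × Euc N)), α ≤ a q ∧ a q ≤ β

/-- The energy `Φ_a(u) = ∬ a(x,y)|u(x)-u(y)|^p / |x-y|^{N+sp} dx dy`. -/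
def PhiA (N : ℕ) (s p : ℝ) (a : Euc N × Euc N → ℝ) (u : Euc N → ℝ) : ℝ≥0∞ :=
  ∫⁻ q : Euc N × Euc N,
    ENNReal.ofReal (a q * |u q.1 - u q.2| ^ p / ‖q.1 - q.2‖ ^ ((N : ℝ) + s * p)) ∂volume



/-- Lintegral of `|w|^p` equals `eLpNorm ^ p`. -/
lemma lint_abs_rpow_eq {X : Type*} [MeasurableSpace X] (ν : Measure X) (w : X → ℝ)
    {p : ℝ} (hp : 0 < p) :
    ∫⁻ x, ENNReal.ofReal (|w x| ^ p) ∂ν = (eLpNorm w (ENNReal.ofReal p) ν) ^ p := by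
  rw [eLpNorm_eq_lintegral_rpow_enorm_toReal (by simp [ENNReal.ofReal_eq_zero]; linarith) ENNReal.ofReal_ne_top]
  rw [ENNReal.toReal_ofReal hp.le, ← ENNReal.rpow_mul, one_div, inv_mul_cancel₀ hp.ne',
    ENNReal.rpow_one]
  refine lintegral_congr fun x => ?_
  rw [← Real.norm_eq_abs, ← ofReal_norm,
    ENNReal.ofReal_rpow_of_nonneg (norm_nonneg _) hp.le]

/-- MVT-type inequality for `rpow` of absolute values. -/
lemma abs_rpow_sub_abs_rpow_le {p : ℝ} (hp : 1 ≤ p) (a b : ℝ) :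
    |(|a| ^ p) - |b| ^ p| ≤ p * (|a| + |b|) ^ (p - 1) * |a - b| := by
  have key : ∀ A B : ℝ, 0 ≤ B → B ≤ A → A ^ p - B ^ p ≤ p * (A + B) ^ (p - 1) * (A - B) := by
    intro A B hB hBA
    rcases eq_or_lt_of_le hBA with rfl | h
    · simp only [sub_self, mul_zero]; exact le_rfl
    obtain ⟨c, hc, hderiv⟩ := exists_hasDerivAt_eq_slope (fun x : ℝ => x ^ p)
      (fun x => p * x ^ (p - 1)) h
      ((Real.continuous_rpow_const (by linarith)).continuousOn)
      (fun x _ => Real.hasDerivAt_rpow_const (Or.inr hp))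
    have hc0 : 0 ≤ c := le_of_lt (lt_of_le_of_lt hB hc.1)
    have hcA : c ≤ A + B := by nlinarith [hc.2.le]
    have hAB : A - B ≠ 0 := sub_ne_zero.2 h.ne'
    have h1 : A ^ p - B ^ p = p * c ^ (p - 1) * (A - B) := by
      rw [hderiv, div_mul_cancel₀ _ hAB]
    have h2 : c ^ (p - 1) ≤ (A + B) ^ (p - 1) :=
      Real.rpow_le_rpow hc0 hcA (by linarith)
    have hp0 : (0:ℝ) ≤ p := by linarith
    have h3 : c ^ (p - 1) * (A - B) ≤ (A + B) ^ (p - 1) * (A - B) :=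
      mul_le_mul_of_nonneg_right h2 (by linarith)
    calc A ^ p - B ^ p = p * (c ^ (p - 1) * (A - B)) := by rw [h1]; ring
      _ ≤ p * ((A + B) ^ (p - 1) * (A - B)) := mul_le_mul_of_nonneg_left h3 hp0
      _ = p * (A + B) ^ (p - 1) * (A - B) := by ring
  have hK : (0:ℝ) ≤ p * (|a| + |b|) ^ (p - 1) := by positivity
  rcases le_total |b| |a| with hba | hab
  · have h1 := key |a| |b| (abs_nonneg b) hba
    have h2 : (0:ℝ) ≤ |a| ^ p - |b| ^ p :=
      sub_nonneg.2 (Real.rpow_le_rpow (abs_nonneg b) hba (by linarith))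
    rw [abs_of_nonneg h2]
    refine h1.trans ?_
    have h3 : |a| - |b| ≤ |a - b| := abs_sub_abs_le_abs_sub a b
    exact mul_le_mul_of_nonneg_left h3 hK
  · have h1 := key |b| |a| (abs_nonneg a) hab
    rw [show |b| + |a| = |a| + |b| from add_comm _ _] at h1
    have h2 : |a| ^ p - |b| ^ p ≤ 0 :=
      sub_nonpos.2 (Real.rpow_le_rpow (abs_nonneg a) hab (by linarith))
    rw [abs_of_nonpos h2]
    have h3 : |b| - |a| ≤ |a - b| := by
      rw [abs_sub_comm]; exact abs_sub_abs_le_abs_sub b a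
    have := mul_le_mul_of_nonneg_left h3 hK
    calc -(|a| ^ p - |b| ^ p) = |b| ^ p - |a| ^ p := by ring
      _ ≤ p * (|a| + |b|) ^ (p - 1) * (|b| - |a|) := h1
      _ ≤ p * (|a| + |b|) ^ (p - 1) * |a - b| := this

/-- liminf of `u + c` with `c → 0` is at most liminf of `u`, in `ℝ≥0∞`. -/
lemma liminf_add_tendsto_zero {u c : ℕ → ℝ≥0∞} (hc : Tendsto c atTop (𝓝 0)) :
    Filter.liminf (fun n => u n + c n) atTop ≤ Filter.liminf u atTop := by
  refine ENNReal.le_of_forall_pos_le_add fun ε hε _ => ?_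
  have hev : ∀ᶠ n in atTop, c n < (ε : ℝ≥0∞) :=
    hc.eventually (gt_mem_nhds (by exact_mod_cast hε))
  have h1 : Filter.liminf (fun n => u n + c n) atTop
      ≤ Filter.liminf (fun n => u n + (ε : ℝ≥0∞)) atTop :=
    Filter.liminf_le_liminf (hev.mono fun n hn => add_le_add_right hn.le _)
  have h2 : Filter.liminf (fun n => u n + (ε : ℝ≥0∞)) atTop
      = Filter.liminf u atTop + ε := by
    have hmono : Monotone (fun x : ℝ≥0∞ => x + (ε : ℝ≥0∞)) :=
      fun x y h => add_le_add_left h _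
    have := hmono.map_liminf_of_continuousAt (F := atTop) u
      ((continuous_add_right (ε : ℝ≥0∞)).continuousAt)
    simpa [Function.comp_def] using this.symm
  exact h1.trans_eq h2

/-- Bound for the double integral of `|w x - w y|^p` over a product of balls. -/
lemma prod_ball_bound (N : ℕ) {p : ℝ} (hp : 1 ≤ p) (R : ℝ) (w : Euc N → ℝ)
    (hw : AEMeasurable w volume) :
    ∫⁻ q in (Metric.closedBall (0 : Euc N) R) ×ˢ (Metric.closedBall (0 : Euc N) R),
        ENNReal.ofReal (|w q.1 - w q.2| ^ p) ∂volume
      ≤ (2:ℝ≥0∞) ^ p * volume (Metric.closedBall (0 : Euc N) R)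
        * (eLpNorm w (ENNReal.ofReal p) volume) ^ p := by
  have hp0 : (0:ℝ) < p := lt_of_lt_of_le one_pos hp
  set B := Metric.closedBall (0 : Euc N) R
  have habs : Measurable (fun t : ℝ => ENNReal.ofReal (|t| ^ p)) := by
    have : Continuous (fun t : ℝ => |t| ^ p) :=
      (Real.continuous_rpow_const hp0.le).comp continuous_abs
    exact ENNReal.measurable_ofReal.comp this.measurable
  have hw1 : AEMeasurable (fun q : Euc N × Euc N => ENNReal.ofReal (|w q.1| ^ p)) volume := by
    rw [Measure.volume_eq_prod]
    exact habs.comp_aemeasurable hw.comp_fst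
  have hw2 : AEMeasurable (fun q : Euc N × Euc N => ENNReal.ofReal (|w q.2| ^ p)) volume := by
    rw [Measure.volume_eq_prod]
    exact habs.comp_aemeasurable hw.comp_snd
  -- pointwise bound
  have hpt : ∀ q : Euc N × Euc N, ENNReal.ofReal (|w q.1 - w q.2| ^ p)
      ≤ (2:ℝ≥0∞) ^ (p - 1) *
        (ENNReal.ofReal (|w q.1| ^ p) + ENNReal.ofReal (|w q.2| ^ p)) := by
    intro q
    have h1 : ENNReal.ofReal (|w q.1 - w q.2| ^ p)
        = ENNReal.ofReal (|w q.1 - w q.2|) ^ p :=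
      (ENNReal.ofReal_rpow_of_nonneg (abs_nonneg _) hp0.le).symm
    have h2 : ENNReal.ofReal (|w q.1 - w q.2|) ≤ ENNReal.ofReal (|w q.1|) + ENNReal.ofReal (|w q.2|) := by
      rw [← ENNReal.ofReal_add (abs_nonneg _) (abs_nonneg _)]
      exact ENNReal.ofReal_le_ofReal (abs_sub _ _)
    calc ENNReal.ofReal (|w q.1 - w q.2| ^ p)
        = ENNReal.ofReal (|w q.1 - w q.2|) ^ p := h1
      _ ≤ (ENNReal.ofReal (|w q.1|) + ENNReal.ofReal (|w q.2|)) ^ p :=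
          ENNReal.rpow_le_rpow h2 hp0.le
      _ ≤ (2:ℝ≥0∞) ^ (p - 1)
          * (ENNReal.ofReal (|w q.1|) ^ p + ENNReal.ofReal (|w q.2|) ^ p) :=
          ENNReal.rpow_add_le_mul_rpow_add_rpow _ _ hp
      _ = (2:ℝ≥0∞) ^ (p - 1) *
          (ENNReal.ofReal (|w q.1| ^ p) + ENNReal.ofReal (|w q.2| ^ p)) := by
          rw [ENNReal.ofReal_rpow_of_nonneg (abs_nonneg _) hp0.le,
            ENNReal.ofReal_rpow_of_nonneg (abs_nonneg _) hp0.le]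
  have hfst : ∫⁻ q in B ×ˢ B, ENNReal.ofReal (|w q.1| ^ p) ∂volume
      ≤ volume B * (eLpNorm w (ENNReal.ofReal p) volume) ^ p := by
    rw [Measure.volume_eq_prod, ← Measure.prod_restrict]
    have := lintegral_prod_mul (μ := volume.restrict B) (ν := volume.restrict B)
      (f := fun x : Euc N => ENNReal.ofReal (|w x| ^ p)) (g := fun _ => (1:ℝ≥0∞))
      (habs.comp_aemeasurable hw.restrict) aemeasurable_const
    simp only [mul_one] at this
    rw [this, lintegral_one, Measure.restrict_apply_univ]
    rw [mul_comm]
    refine mul_le_mul' le_rfl ?_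
    rw [← lint_abs_rpow_eq volume w hp0]
    exact setLIntegral_le_lintegral _ _
  have hsnd : ∫⁻ q in B ×ˢ B, ENNReal.ofReal (|w q.2| ^ p) ∂volume
      ≤ volume B * (eLpNorm w (ENNReal.ofReal p) volume) ^ p := by
    rw [Measure.volume_eq_prod, ← Measure.prod_restrict]
    have := lintegral_prod_mul (μ := volume.restrict B) (ν := volume.restrict B)
      (f := fun _ : Euc N => (1:ℝ≥0∞)) (g := fun x : Euc N => ENNReal.ofReal (|w x| ^ p))
      aemeasurable_const (habs.comp_aemeasurable hw.restrict)
    simp only [one_mul] at this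
    rw [this, lintegral_one, Measure.restrict_apply_univ]
    refine mul_le_mul' le_rfl ?_
    rw [← lint_abs_rpow_eq volume w hp0]
    exact setLIntegral_le_lintegral _ _
  calc ∫⁻ q in B ×ˢ B, ENNReal.ofReal (|w q.1 - w q.2| ^ p) ∂volume
      ≤ ∫⁻ q in B ×ˢ B, (2:ℝ≥0∞) ^ (p - 1) *
          (ENNReal.ofReal (|w q.1| ^ p) + ENNReal.ofReal (|w q.2| ^ p)) ∂volume :=
        lintegral_mono hpt
    _ = (2:ℝ≥0∞) ^ (p - 1) * (∫⁻ q in B ×ˢ B, (ENNReal.ofReal (|w q.1| ^ p)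
          + ENNReal.ofReal (|w q.2| ^ p)) ∂volume) :=
        lintegral_const_mul' _ _ (by simp [ENNReal.rpow_ne_top_of_nonneg (by linarith : (0:ℝ) ≤ p - 1)])
    _ = (2:ℝ≥0∞) ^ (p - 1) * ((∫⁻ q in B ×ˢ B, ENNReal.ofReal (|w q.1| ^ p) ∂volume)
          + ∫⁻ q in B ×ˢ B, ENNReal.ofReal (|w q.2| ^ p) ∂volume) := by
        rw [lintegral_add_left' hw1.restrict]
    _ ≤ (2:ℝ≥0∞) ^ (p - 1) * (volume B * (eLpNorm w (ENNReal.ofReal p) volume) ^ p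
          + volume B * (eLpNorm w (ENNReal.ofReal p) volume) ^ p) :=
        mul_le_mul' le_rfl (add_le_add hfst hsnd)
    _ = ((2:ℝ≥0∞) ^ (p - 1) * 2) * (volume B * (eLpNorm w (ENNReal.ofReal p) volume) ^ p) := by
        ring
    _ = (2:ℝ≥0∞) ^ p * volume B * (eLpNorm w (ENNReal.ofReal p) volume) ^ p := by
        have h2p : (2:ℝ≥0∞) ^ (p - 1) * 2 = 2 ^ p := by
          rw [ENNReal.rpow_sub _ _ two_ne_zero ENNReal.ofNat_ne_top, ENNReal.rpow_one,
            ENNReal.div_mul_cancel two_ne_zero ENNReal.ofNat_ne_top]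
        rw [h2p, mul_assoc]

/-- Pointwise power-sum bound in `ℝ≥0∞`. -/
lemma ofReal_add_abs_rpow_le {p : ℝ} (hp : 1 ≤ p) (a b : ℝ) :
    ENNReal.ofReal ((|a| + |b|) ^ p)
      ≤ (2:ℝ≥0∞) ^ (p - 1) * (ENNReal.ofReal (|a| ^ p) + ENNReal.ofReal (|b| ^ p)) := by
  have hp0 : (0:ℝ) < p := lt_of_lt_of_le one_pos hp
  calc ENNReal.ofReal ((|a| + |b|) ^ p)
      = (ENNReal.ofReal (|a| + |b|)) ^ p := by
        rw [ENNReal.ofReal_rpow_of_nonneg (by positivity) hp0.le]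
    _ = (ENNReal.ofReal |a| + ENNReal.ofReal |b|) ^ p := by
        rw [ENNReal.ofReal_add (abs_nonneg _) (abs_nonneg _)]
    _ ≤ (2:ℝ≥0∞) ^ (p - 1) * ((ENNReal.ofReal |a|) ^ p + (ENNReal.ofReal |b|) ^ p) :=
        ENNReal.rpow_add_le_mul_rpow_add_rpow _ _ hp
    _ = (2:ℝ≥0∞) ^ (p - 1) * (ENNReal.ofReal (|a| ^ p) + ENNReal.ofReal (|b| ^ p)) := by
        rw [ENNReal.ofReal_rpow_of_nonneg (abs_nonneg _) hp0.le,
          ENNReal.ofReal_rpow_of_nonneg (abs_nonneg _) hp0.le]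


/-- Γ-liminf inequality for homogenization of fractional energies: if
`aₙ ⇀* a₀` in `L^∞`, `vₙ → v` in `L^p(Ω)` and `sup_n Φ_{aₙ}(vₙ) < ∞`, then `v ∈ W^{s,p}_0(Ω)`
and `Φ_{a₀}(v) ≤ liminf Φ_{aₙ}(vₙ)`. -/
theorem homogenization_liminf (N : ℕ) (Ω : Set (Euc N)) (hΩo : IsOpen Ω)
    (hΩb : Bornology.IsBounded Ω) (s p : ℝ) (hs : 0 < s) (hs1 : s < 1) (hp : 1 < p)
    (α β : ℝ) (hα : 0 < α) (hαβ : α ≤ β)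
    (an : ℕ → Euc N × Euc N → ℝ) (a0 : Euc N × Euc N → ℝ)
    (han : ∀ n, memA N α β (an n)) (ha0 : memA N α β a0)
    -- weak* convergence in L^∞(ℝ^N×ℝ^N)
    (hweak : ∀ g : Euc N × Euc N → ℝ, Integrable g volume →
      Tendsto (fun n => ∫ q, an n q * g q) atTop (𝓝 (∫ q, a0 q * g q)))
    (vn : ℕ → Euc N → ℝ) (v : Euc N → ℝ)
    (hvn : ∀ n, MemLp (vn n) (ENNReal.ofReal p) volume)
    (hvnΩ : ∀ n, ∀ᵐ x ∂(volume : Measure (Euc N)), x ∉ Ω → vn n x = 0)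
    (hv : MemLp v (ENNReal.ofReal p) volume)
    (hvΩ : ∀ᵐ x ∂(volume : Measure (Euc N)), x ∉ Ω → v x = 0)
    (hconv : Tendsto (fun n => eLpNorm (vn n - v) (ENNReal.ofReal p) volume) atTop (𝓝 0))
    (hbdd : ∃ M : ℝ≥0∞, M < ⊤ ∧ ∀ n, PhiA N s p (an n) (vn n) ≤ M) :
    memW0 N s p Ω v ∧
      PhiA N s p a0 v ≤ Filter.liminf (fun n => PhiA N s p (an n) (vn n)) atTop := by
  classical
  have hp0 : (0:ℝ) < p := one_pos.trans hp
  set c : ℝ := (N : ℝ) + s * p with hcdef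
  have hc0 : 0 < c := by rw [hcdef]; positivity
  set P : ℝ≥0∞ := ENNReal.ofReal p with hPdef
  have hP1 : (1:ℝ≥0∞) ≤ P := by
    rw [hPdef, ← ENNReal.ofReal_one]; exact ENNReal.ofReal_le_ofReal hp.le
  obtain ⟨M, hMtop, hM⟩ := hbdd
  have hvm : AEMeasurable v volume := hv.aestronglyMeasurable.aemeasurable
  have hvnm : ∀ n, AEMeasurable (vn n) volume :=
    fun n => (hvn n).aestronglyMeasurable.aemeasurable
  set rr : Euc N × Euc N → ℝ := fun q => ‖q.1 - q.2‖ ^ c with hrrdef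
  have hrrm : Measurable rr := by
    have : Continuous rr :=
      ((continuous_fst.sub continuous_snd).norm).rpow_const (fun q => Or.inr hc0.le)
    exact this.measurable
  have hrr0 : ∀ q, 0 ≤ rr q := fun q => Real.rpow_nonneg (norm_nonneg _) _
  have hcomp1 : ∀ (w : Euc N → ℝ), AEMeasurable w volume →
      AEMeasurable (fun q : Euc N × Euc N => w q.1) volume := by
    intro w hw; rw [Measure.volume_eq_prod]; exact hw.comp_fst
  have hcomp2 : ∀ (w : Euc N → ℝ), AEMeasurable w volume →
      AEMeasurable (fun q : Euc N × Euc N => w q.2) volume := by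
    intro w hw; rw [Measure.volume_eq_prod]; exact hw.comp_snd
  have hg0m : AEMeasurable (fun q : Euc N × Euc N => v q.1 - v q.2) volume :=
    (hcomp1 v hvm).sub (hcomp2 v hvm)
  have hgnm : ∀ n, AEMeasurable (fun q : Euc N × Euc N => vn n q.1 - vn n q.2) volume :=
    fun n => (hcomp1 _ (hvnm n)).sub (hcomp2 _ (hvnm n))
  have habs : Measurable (fun t : ℝ => |t| ^ p) :=
    ((Real.continuous_rpow_const hp0.le).comp continuous_abs).measurable
  set φ : Euc N × Euc N → ℝ := fun q => |v q.1 - v q.2| ^ p / rr q with hφdef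
  have hφm : AEMeasurable φ volume :=
    (habs.comp_aemeasurable hg0m).div hrrm.aemeasurable
  have hφ0 : ∀ q, 0 ≤ φ q :=
    fun q => div_nonneg (Real.rpow_nonneg (abs_nonneg _) _) (hrr0 q)
  -- the exhausting sets
  set Em : ℕ → Set (Euc N × Euc N) := fun m =>
    {q | 1 / ((m:ℝ) + 1) ≤ ‖q.1 - q.2‖ ∧ ‖q.1‖ ≤ m ∧ ‖q.2‖ ≤ m} with hEmdef
  have hEmeas : ∀ m, MeasurableSet (Em m) := by
    intro m
    have h1 : MeasurableSet {q : Euc N × Euc N | 1 / ((m:ℝ) + 1) ≤ ‖q.1 - q.2‖} :=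
      measurableSet_le measurable_const ((continuous_fst.sub continuous_snd).norm).measurable
    have h2 : MeasurableSet {q : Euc N × Euc N | ‖q.1‖ ≤ (m:ℝ)} :=
      measurableSet_le (continuous_fst.norm).measurable measurable_const
    have h3 : MeasurableSet {q : Euc N × Euc N | ‖q.2‖ ≤ (m:ℝ)} :=
      measurableSet_le (continuous_snd.norm).measurable measurable_const
    have he : Em m = {q : Euc N × Euc N | 1 / ((m:ℝ) + 1) ≤ ‖q.1 - q.2‖} ∩
        ({q : Euc N × Euc N | ‖q.1‖ ≤ (m:ℝ)} ∩ {q : Euc N × Euc N | ‖q.2‖ ≤ (m:ℝ)}) := by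
      ext q; simp [hEmdef, and_assoc]
    rw [he]; exact h1.inter (h2.inter h3)
  have hEmono : Monotone Em := by
    intro m1 m2 h q hq
    obtain ⟨h1, h2, h3⟩ := hq
    have hm : (m1:ℝ) ≤ m2 := by exact_mod_cast h
    refine ⟨le_trans ?_ h1, h2.trans hm, h3.trans hm⟩
    apply one_div_le_one_div_of_le (by positivity)
    linarith
  have hEsub : ∀ m : ℕ, Em m ⊆ (Metric.closedBall (0:Euc N) (m:ℝ)) ×ˢ
      (Metric.closedBall (0:Euc N) (m:ℝ)) := by
    intro m q hq
    exact ⟨mem_closedBall_zero_iff.2 hq.2.1, mem_closedBall_zero_iff.2 hq.2.2⟩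
  have hrrEm : ∀ m : ℕ, ∀ q ∈ Em m, ((((m:ℝ)+1) ^ c)⁻¹ : ℝ) ≤ rr q := by
    intro m q hq
    have h1 : (1 / ((m:ℝ)+1)) ^ c ≤ rr q :=
      Real.rpow_le_rpow (by positivity) hq.1 hc0.le
    rwa [one_div, Real.inv_rpow (by positivity)] at h1
  have hdivEm : ∀ m : ℕ, ∀ q ∈ Em m, ∀ x : ℝ, 0 ≤ x →
      x / rr q ≤ ((m:ℝ)+1) ^ c * x := by
    intro m q hq x hx
    have h1 : x / rr q ≤ x / ((((m:ℝ)+1) ^ c)⁻¹ : ℝ) :=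
      div_le_div_of_nonneg_left hx (by positivity) (hrrEm m q hq)
    rwa [div_inv_eq_mul, mul_comm] at h1
  -- finiteness of basic double integrals
  have hIbound : ∀ (m:ℕ) (w : Euc N → ℝ), AEMeasurable w volume →
      ∫⁻ q in Em m, ENNReal.ofReal (|w q.1 - w q.2| ^ p) ∂volume
        ≤ (2:ℝ≥0∞) ^ p * volume (Metric.closedBall (0:Euc N) (m:ℝ))
          * (eLpNorm w P volume) ^ p := by
    intro m w hw
    refine le_trans (lintegral_mono_set (hEsub m)) ?_
    exact prod_ball_bound N hp.le (m:ℝ) w hw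
  have hIfin : ∀ (m:ℕ) (w : Euc N → ℝ), AEMeasurable w volume → eLpNorm w P volume < ⊤ →
      ∫⁻ q in Em m, ENNReal.ofReal (|w q.1 - w q.2| ^ p) ∂volume < ⊤ := by
    intro m w hw hLp
    refine lt_of_le_of_lt (hIbound m w hw) ?_
    refine ENNReal.mul_lt_top ?_ ?_
    · exact ENNReal.mul_lt_top
        (ENNReal.rpow_lt_top_of_nonneg hp0.le ENNReal.ofNat_ne_top)
        measure_closedBall_lt_top
    · exact ENNReal.rpow_lt_top_of_nonneg hp0.le hLp.ne
  have hvLp : eLpNorm v P volume < ⊤ := hv.eLpNorm_lt_top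
  -- integrability of φ on Em m
  have hφint : ∀ m, IntegrableOn φ (Em m) volume := by
    intro m
    refine ⟨(hφm.restrict).aestronglyMeasurable, ?_⟩
    rw [hasFiniteIntegral_iff_norm]
    have hb : ∀ᵐ q ∂(volume.restrict (Em m)),
        ENNReal.ofReal ‖φ q‖
          ≤ ENNReal.ofReal (((m:ℝ)+1) ^ c) * ENNReal.ofReal (|v q.1 - v q.2| ^ p) := by
      refine (ae_restrict_mem (hEmeas m)).mono fun q hq => ?_
      rw [← ENNReal.ofReal_mul (by positivity)]
      apply ENNReal.ofReal_le_ofReal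
      rw [Real.norm_eq_abs, abs_of_nonneg (hφ0 q)]
      exact hdivEm m q hq _ (Real.rpow_nonneg (abs_nonneg _) _)
    refine lt_of_le_of_lt (lintegral_mono_ae hb) ?_
    rw [lintegral_const_mul' _ _ ENNReal.ofReal_ne_top]
    exact ENNReal.mul_lt_top ENNReal.ofReal_lt_top (hIfin m v hvm hvLp)
  -- weak* convergence of the localized integrals
  have hWK : ∀ m, Tendsto (fun n => ∫⁻ q in Em m, ENNReal.ofReal (an n q * φ q) ∂volume)
      atTop (𝓝 (∫⁻ q in Em m, ENNReal.ofReal (a0 q * φ q) ∂volume)) := by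
    intro m
    have hbint : ∀ b : Euc N × Euc N → ℝ, memA N α β b →
        IntegrableOn (fun q => b q * φ q) (Em m) volume := by
      intro b hb
      refine Integrable.mono' ((hφint m).const_mul β)
        ((hb.1.aemeasurable.mul hφm).restrict).aestronglyMeasurable ?_
      refine (ae_restrict_of_ae hb.2.2).mono fun q hq => ?_
      have h0 : 0 ≤ b q := le_trans hα.le hq.1
      rw [Real.norm_eq_abs, abs_mul, abs_of_nonneg h0, abs_of_nonneg (hφ0 q)]
      exact mul_le_mul_of_nonneg_right hq.2 (hφ0 q)
    have hgint : Integrable ((Em m).indicator φ) volume :=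
      (integrable_indicator_iff (hEmeas m)).2 (hφint m)
    have h := hweak _ hgint
    have hrw : ∀ b : Euc N × Euc N → ℝ,
        (∫ q, b q * (Em m).indicator φ q) = ∫ q in Em m, b q * φ q := by
      intro b
      rw [← integral_indicator (hEmeas m)]
      congr 1
      funext q
      by_cases hq : q ∈ Em m
      · simp [Set.indicator_of_mem hq]
      · simp [Set.indicator_of_notMem hq]
    have h2 : Tendsto (fun n => ∫ q in Em m, an n q * φ q) atTop
        (𝓝 (∫ q in Em m, a0 q * φ q)) := by
      simpa only [hrw] using h
    have hofR : ∀ b : Euc N × Euc N → ℝ, memA N α β b →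
        ∫⁻ q in Em m, ENNReal.ofReal (b q * φ q) ∂volume
          = ENNReal.ofReal (∫ q in Em m, b q * φ q) := by
      intro b hb
      rw [ofReal_integral_eq_lintegral_ofReal (hbint b hb)
        ((ae_restrict_of_ae hb.2.2).mono fun q hq => mul_nonneg (hα.le.trans hq.1) (hφ0 q))]
    have h3 := (ENNReal.continuous_ofReal.tendsto _).comp h2
    simp only [Function.comp_def] at h3
    rw [hofR a0 ha0]
    exact h3.congr fun n => (hofR (an n) (han n)).symm
  -- the error terms tend to zero
  have hD0 : ∀ m : ℕ, Tendsto (fun n => ∫⁻ q in Em m,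
      ENNReal.ofReal |(|v q.1 - v q.2| ^ p) - |vn n q.1 - vn n q.2| ^ p| ∂volume)
      atTop (𝓝 0) := by
    intro m
    set pc : ℝ := p / (p - 1) with hpcdef
    have hpq : pc.HolderConjugate p := by
      have : pc = Real.conjExponent p := rfl
      rw [this]
      exact (Real.HolderConjugate.conjExponent hp).symm
    have hpc0 : 0 < pc := hpq.pos
    have hpcp : (p - 1) * pc = p := by
      have hne : p - 1 ≠ 0 := by linarith
      rw [hpcdef]
      field_simp
    set B : Set (Euc N) := Metric.closedBall (0:Euc N) (m:ℝ) with hBdef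
    set CB : ℝ≥0∞ := (2:ℝ≥0∞) ^ p * volume B with hCBdef
    have hCBtop : CB ≠ ⊤ := by
      rw [hCBdef]
      exact (ENNReal.mul_lt_top
        (ENNReal.rpow_lt_top_of_nonneg hp0.le ENNReal.ofNat_ne_top)
        measure_closedBall_lt_top).ne
    set F : ℕ → Euc N × Euc N → ℝ≥0∞ := fun n q =>
      ENNReal.ofReal ((|v q.1 - v q.2| + |vn n q.1 - vn n q.2|) ^ (p - 1)) with hFdef
    set G : ℕ → Euc N × Euc N → ℝ≥0∞ := fun n q =>
      ENNReal.ofReal |(vn n - v) q.1 - (vn n - v) q.2| with hGdef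
    have hFm : ∀ n, AEMeasurable (F n) volume := by
      intro n
      have hcont : Continuous (fun t : ℝ => t ^ (p-1)) :=
        Real.continuous_rpow_const (by linarith)
      exact (ENNReal.measurable_ofReal.comp hcont.measurable).comp_aemeasurable
        (((measurable_abs.comp_aemeasurable hg0m)).add
          ((measurable_abs.comp_aemeasurable (hgnm n))))
    have hGm : ∀ n, AEMeasurable (G n) volume := by
      intro n
      have hw : AEMeasurable (vn n - v) volume := (hvnm n).sub hvm
      exact (ENNReal.measurable_ofReal.comp measurable_abs).comp_aemeasurable
        ((hcomp1 _ hw).sub (hcomp2 _ hw))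
    -- step 1 : pointwise bound and Hölder
    have step1 : ∀ n, ∫⁻ q in Em m,
        ENNReal.ofReal |(|v q.1 - v q.2| ^ p) - |vn n q.1 - vn n q.2| ^ p| ∂volume
          ≤ ENNReal.ofReal p *
            ((∫⁻ q in Em m, F n q ^ pc ∂volume) ^ (1/pc) *
              (∫⁻ q in Em m, G n q ^ p ∂volume) ^ (1/p)) := by
      intro n
      have hpt : ∀ q : Euc N × Euc N,
          ENNReal.ofReal |(|v q.1 - v q.2| ^ p) - |vn n q.1 - vn n q.2| ^ p|
            ≤ ENNReal.ofReal p * (F n q * G n q) := by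
        intro q
        have h1 := abs_rpow_sub_abs_rpow_le hp.le (v q.1 - v q.2) (vn n q.1 - vn n q.2)
        have h2 : |(v q.1 - v q.2) - (vn n q.1 - vn n q.2)|
            = |(vn n - v) q.1 - (vn n - v) q.2| := by
          simp only [Pi.sub_apply]
          rw [abs_sub_comm]
          congr 1
          ring
        rw [h2] at h1
        calc ENNReal.ofReal |(|v q.1 - v q.2| ^ p) - |vn n q.1 - vn n q.2| ^ p|
            ≤ ENNReal.ofReal (p * (|v q.1 - v q.2| + |vn n q.1 - vn n q.2|) ^ (p - 1)
                * |(vn n - v) q.1 - (vn n - v) q.2|) := ENNReal.ofReal_le_ofReal h1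
          _ = ENNReal.ofReal p * (F n q * G n q) := by
              rw [ENNReal.ofReal_mul
                  (mul_nonneg hp0.le (Real.rpow_nonneg (by positivity) _)),
                ENNReal.ofReal_mul hp0.le, mul_assoc]
      refine le_trans (lintegral_mono hpt) ?_
      rw [lintegral_const_mul' _ _ ENNReal.ofReal_ne_top]
      refine mul_le_mul' le_rfl ?_
      exact ENNReal.lintegral_mul_le_Lp_mul_Lq _ hpq ((hFm n).restrict) ((hGm n).restrict)
    -- bound the G-term
    have hGbound : ∀ n, (∫⁻ q in Em m, G n q ^ p ∂volume)
        ≤ CB * (eLpNorm (vn n - v) P volume) ^ p := by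
      intro n
      have he : ∀ q : Euc N × Euc N, G n q ^ p
          = ENNReal.ofReal (|(vn n - v) q.1 - (vn n - v) q.2| ^ p) := by
        intro q
        rw [hGdef, ENNReal.ofReal_rpow_of_nonneg (abs_nonneg _) hp0.le]
      simp only [he]
      rw [hCBdef, hBdef]
      exact hIbound m (vn n - v) ((hvnm n).sub hvm)
    -- bound the F-term, eventually in n
    have hFbound : ∀ᶠ n in atTop, (∫⁻ q in Em m, F n q ^ pc ∂volume)
        ≤ (2:ℝ≥0∞) ^ (p-1) * (CB * (eLpNorm v P volume) ^ p
            + CB * (eLpNorm v P volume + 1) ^ p) := by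
      have hev1 : ∀ᶠ n in atTop, eLpNorm (vn n - v) P volume ≤ 1 :=
        (hconv.eventually (gt_mem_nhds zero_lt_one)).mono fun n hn => hn.le
      have hOv : AEMeasurable (fun q : Euc N × Euc N =>
          ENNReal.ofReal (|v q.1 - v q.2| ^ p)) volume := by
        exact (habs.comp_aemeasurable hg0m).ennreal_ofReal
      refine hev1.mono fun n hn => ?_
      have hΛ : eLpNorm (vn n) P volume ≤ eLpNorm v P volume + 1 := by
        have h1 : vn n = (vn n - v) + v := by funext x; simp
        calc eLpNorm (vn n) P volume = eLpNorm ((vn n - v) + v) P volume := by rw [← h1]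
          _ ≤ eLpNorm (vn n - v) P volume + eLpNorm v P volume :=
              eLpNorm_add_le ((hvnm n).sub hvm).aestronglyMeasurable
                hvm.aestronglyMeasurable hP1
          _ ≤ eLpNorm v P volume + 1 := by
              rw [add_comm]; exact add_le_add_right hn _
      have hptF : ∀ q : Euc N × Euc N, F n q ^ pc ≤ (2:ℝ≥0∞) ^ (p-1) *
          (ENNReal.ofReal (|v q.1 - v q.2| ^ p)
            + ENNReal.ofReal (|vn n q.1 - vn n q.2| ^ p)) := by
        intro q
        have hx0 : (0:ℝ) ≤ |v q.1 - v q.2| + |vn n q.1 - vn n q.2| := by positivity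
        have h1 : F n q ^ pc
            = ENNReal.ofReal ((|v q.1 - v q.2| + |vn n q.1 - vn n q.2|) ^ p) := by
          rw [hFdef, ENNReal.ofReal_rpow_of_nonneg (Real.rpow_nonneg hx0 _) hpc0.le,
            ← Real.rpow_mul hx0, hpcp]
        rw [h1]
        exact ofReal_add_abs_rpow_le hp.le _ _
      calc (∫⁻ q in Em m, F n q ^ pc ∂volume)
          ≤ ∫⁻ q in Em m, (2:ℝ≥0∞) ^ (p-1) *
              (ENNReal.ofReal (|v q.1 - v q.2| ^ p)
                + ENNReal.ofReal (|vn n q.1 - vn n q.2| ^ p)) ∂volume :=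
            lintegral_mono hptF
        _ = (2:ℝ≥0∞) ^ (p-1) * ((∫⁻ q in Em m, ENNReal.ofReal (|v q.1 - v q.2| ^ p) ∂volume)
              + ∫⁻ q in Em m, ENNReal.ofReal (|vn n q.1 - vn n q.2| ^ p) ∂volume) := by
            rw [lintegral_const_mul' _ _
              (ENNReal.rpow_lt_top_of_nonneg (by linarith) ENNReal.ofNat_ne_top).ne,
              lintegral_add_left' (hOv.restrict)]
        _ ≤ (2:ℝ≥0∞) ^ (p-1) * (CB * (eLpNorm v P volume) ^ p
              + CB * (eLpNorm v P volume + 1) ^ p) := by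
            refine mul_le_mul' le_rfl (add_le_add ?_ ?_)
            · rw [hCBdef, hBdef]; exact hIbound m v hvm
            · refine le_trans ?_ (mul_le_mul' le_rfl
                (ENNReal.rpow_le_rpow hΛ hp0.le))
              rw [hCBdef, hBdef]; exact hIbound m (vn n) (hvnm n)
    -- convergence to zero
    set UF : ℝ≥0∞ := (2:ℝ≥0∞) ^ (p-1) * (CB * (eLpNorm v P volume) ^ p
        + CB * (eLpNorm v P volume + 1) ^ p) with hUFdef
    have hvLp1 : eLpNorm v P volume + 1 ≠ ⊤ := by
      simp [ENNReal.add_eq_top, hvLp.ne]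
    have hUFtop : UF ≠ ⊤ := by
      rw [hUFdef]
      refine (ENNReal.mul_lt_top
        (ENNReal.rpow_lt_top_of_nonneg (by linarith) ENNReal.ofNat_ne_top) ?_).ne
      refine ENNReal.add_lt_top.2 ⟨?_, ?_⟩
      · exact ENNReal.mul_lt_top hCBtop.lt_top
          (ENNReal.rpow_lt_top_of_nonneg hp0.le hvLp.ne)
      · exact ENNReal.mul_lt_top hCBtop.lt_top
          (ENNReal.rpow_lt_top_of_nonneg hp0.le hvLp1)
    have hub : ∀ᶠ n in atTop, (∫⁻ q in Em m,
        ENNReal.ofReal |(|v q.1 - v q.2| ^ p) - |vn n q.1 - vn n q.2| ^ p| ∂volume)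
          ≤ ENNReal.ofReal p * (UF ^ (1/pc)
            * (CB * (eLpNorm (vn n - v) P volume) ^ p) ^ (1/p)) := by
      refine hFbound.mono fun n hn => ?_
      refine (step1 n).trans ?_
      refine mul_le_mul' le_rfl (mul_le_mul' ?_ ?_)
      · exact ENNReal.rpow_le_rpow hn (by positivity)
      · exact ENNReal.rpow_le_rpow (hGbound n) (by positivity)
    have h1 : Tendsto (fun n => (eLpNorm (vn n - v) P volume) ^ p) atTop (𝓝 0) := by
      have := ((ENNReal.continuous_rpow_const (y := p)).tendsto (0:ℝ≥0∞)).comp hconv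
      simpa [Function.comp_def, ENNReal.zero_rpow_of_pos hp0] using this
    have h2 : Tendsto (fun n => CB * (eLpNorm (vn n - v) P volume) ^ p) atTop (𝓝 0) := by
      have h2' : Tendsto (fun n => CB * (eLpNorm (vn n - v) P volume) ^ p)
          atTop (𝓝 (CB * 0)) := ENNReal.Tendsto.const_mul h1 (Or.inr hCBtop)
      simpa using h2'
    have h3 : Tendsto (fun n => (CB * (eLpNorm (vn n - v) P volume) ^ p) ^ (1/p))
        atTop (𝓝 0) := by
      have h3' := ((ENNReal.continuous_rpow_const (y := 1/p)).tendsto (0:ℝ≥0∞)).comp h2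
      rw [show ((0:ℝ≥0∞) ^ ((1:ℝ)/p)) = 0 from
        ENNReal.zero_rpow_of_pos (by positivity)] at h3'
      exact h3'
    have h4 : Tendsto (fun n => ENNReal.ofReal p * (UF ^ (1/pc)
        * (CB * (eLpNorm (vn n - v) P volume) ^ p) ^ (1/p))) atTop (𝓝 0) := by
      have h5 : Tendsto (fun n => UF ^ (1/pc)
          * ((CB * (eLpNorm (vn n - v) P volume) ^ p) ^ (1/p))) atTop
          (𝓝 (UF ^ (1/pc) * 0)) :=
        ENNReal.Tendsto.const_mul h3
          (Or.inr (ENNReal.rpow_lt_top_of_nonneg (by positivity) hUFtop).ne)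
      rw [mul_zero] at h5
      have h6 : Tendsto (fun n => ENNReal.ofReal p * (UF ^ (1/pc)
          * ((CB * (eLpNorm (vn n - v) P volume) ^ p) ^ (1/p)))) atTop
          (𝓝 (ENNReal.ofReal p * 0)) :=
        ENNReal.Tendsto.const_mul h5 (Or.inr ENNReal.ofReal_ne_top)
      rw [mul_zero] at h6
      exact h6
    exact tendsto_of_tendsto_of_tendsto_of_le_of_le' tendsto_const_nhds h4
      (Eventually.of_forall fun n => zero_le) hub
  -- per-m liminf inequality
  have keym : ∀ m : ℕ, (∫⁻ q in Em m, ENNReal.ofReal (a0 q * φ q) ∂volume)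
      ≤ Filter.liminf (fun n => PhiA N s p (an n) (vn n)) atTop := by
    intro m
    have hβCm : (0:ℝ) ≤ β * (((m:ℝ)+1) ^ c) := by
      have : (0:ℝ) < β := lt_of_lt_of_le hα hαβ
      positivity
    have hineq : ∀ n, ∫⁻ q in Em m, ENNReal.ofReal (an n q * φ q) ∂volume
        ≤ PhiA N s p (an n) (vn n) + ENNReal.ofReal (β * (((m:ℝ)+1) ^ c)) *
          ∫⁻ q in Em m,
            ENNReal.ofReal |(|v q.1 - v q.2| ^ p) - |vn n q.1 - vn n q.2| ^ p| ∂volume := by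
      intro n
      have hae : ∀ᵐ q ∂(volume.restrict (Em m)),
          ENNReal.ofReal (an n q * φ q)
            ≤ ENNReal.ofReal (an n q * (|vn n q.1 - vn n q.2| ^ p / rr q))
              + ENNReal.ofReal (β * (((m:ℝ)+1) ^ c)) *
                ENNReal.ofReal |(|v q.1 - v q.2| ^ p) - |vn n q.1 - vn n q.2| ^ p| := by
        filter_upwards [ae_restrict_of_ae (han n).2.2, ae_restrict_mem (hEmeas m)]
          with q hb hq
        have h0an : 0 ≤ an n q := hα.le.trans hb.1
        have hβ0 : (0:ℝ) ≤ β := hα.le.trans hαβ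
        have hstep : an n q * φ q ≤ an n q * (|vn n q.1 - vn n q.2| ^ p / rr q)
            + (β * (((m:ℝ)+1) ^ c)) *
              |(|v q.1 - v q.2| ^ p) - |vn n q.1 - vn n q.2| ^ p| := by
          have e1 : an n q * φ q - an n q * (|vn n q.1 - vn n q.2| ^ p / rr q)
              = an n q * (((|v q.1 - v q.2| ^ p) - |vn n q.1 - vn n q.2| ^ p) / rr q) := by
            rw [hφdef]
            simp only
            rw [← mul_sub, ← sub_div]
          have e2 : an n q * (((|v q.1 - v q.2| ^ p) - |vn n q.1 - vn n q.2| ^ p) / rr q)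
              ≤ β * |((|v q.1 - v q.2| ^ p) - |vn n q.1 - vn n q.2| ^ p) / rr q| :=
            le_trans (mul_le_mul_of_nonneg_left (le_abs_self _) h0an)
              (mul_le_mul_of_nonneg_right hb.2 (abs_nonneg _))
          have e3 : |((|v q.1 - v q.2| ^ p) - |vn n q.1 - vn n q.2| ^ p) / rr q|
              = |(|v q.1 - v q.2| ^ p) - |vn n q.1 - vn n q.2| ^ p| / rr q := by
            rw [abs_div, abs_of_nonneg (hrr0 q)]
          have e4 : |(|v q.1 - v q.2| ^ p) - |vn n q.1 - vn n q.2| ^ p| / rr q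
              ≤ (((m:ℝ)+1) ^ c) * |(|v q.1 - v q.2| ^ p) - |vn n q.1 - vn n q.2| ^ p| :=
            hdivEm m q hq _ (abs_nonneg _)
          have e5 : β * |((|v q.1 - v q.2| ^ p) - |vn n q.1 - vn n q.2| ^ p) / rr q|
              ≤ β * ((((m:ℝ)+1) ^ c) * |(|v q.1 - v q.2| ^ p) - |vn n q.1 - vn n q.2| ^ p|) := by
            rw [e3]
            exact mul_le_mul_of_nonneg_left e4 hβ0
          have e6 : β * ((((m:ℝ)+1) ^ c) * |(|v q.1 - v q.2| ^ p) - |vn n q.1 - vn n q.2| ^ p|)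
              = (β * (((m:ℝ)+1) ^ c)) *
                |(|v q.1 - v q.2| ^ p) - |vn n q.1 - vn n q.2| ^ p| := by ring
          linarith [e1, e2, e5]
        calc ENNReal.ofReal (an n q * φ q)
            ≤ ENNReal.ofReal (an n q * (|vn n q.1 - vn n q.2| ^ p / rr q)
              + (β * (((m:ℝ)+1) ^ c)) *
                |(|v q.1 - v q.2| ^ p) - |vn n q.1 - vn n q.2| ^ p|) :=
              ENNReal.ofReal_le_ofReal hstep
          _ ≤ _ := by
              refine (ENNReal.ofReal_add_le).trans ?_
              rw [ENNReal.ofReal_mul hβCm]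
      have hsplit := lintegral_mono_ae hae
      have haem : AEMeasurable (fun q : Euc N × Euc N =>
          ENNReal.ofReal (β * (((m:ℝ)+1) ^ c)) *
            ENNReal.ofReal |(|v q.1 - v q.2| ^ p) - |vn n q.1 - vn n q.2| ^ p|)
          (volume.restrict (Em m)) := by
      -- const * ofReal |...|
        refine AEMeasurable.const_mul ?_ _
        exact (measurable_abs.comp_aemeasurable
          ((habs.comp_aemeasurable hg0m).sub
            (habs.comp_aemeasurable (hgnm n)))).ennreal_ofReal.restrict
      rw [lintegral_add_right' _ haem,
        lintegral_const_mul' _ _ ENNReal.ofReal_ne_top] at hsplit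
      refine hsplit.trans (add_le_add ?_ le_rfl)
      have hPhieq : PhiA N s p (an n) (vn n)
          = ∫⁻ q, ENNReal.ofReal (an n q * (|vn n q.1 - vn n q.2| ^ p / rr q)) ∂volume := by
        simp only [PhiA, hrrdef, mul_div_assoc, ← hcdef]
      rw [hPhieq]
      exact setLIntegral_le_lintegral _ _
    have hc0' : Tendsto (fun n => ENNReal.ofReal (β * (((m:ℝ)+1) ^ c)) *
        ∫⁻ q in Em m,
          ENNReal.ofReal |(|v q.1 - v q.2| ^ p) - |vn n q.1 - vn n q.2| ^ p| ∂volume)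
        atTop (𝓝 0) := by
      have h5 : Tendsto (fun n => ENNReal.ofReal (β * (((m:ℝ)+1) ^ c)) *
          ∫⁻ q in Em m,
            ENNReal.ofReal |(|v q.1 - v q.2| ^ p) - |vn n q.1 - vn n q.2| ^ p| ∂volume)
          atTop (𝓝 (ENNReal.ofReal (β * (((m:ℝ)+1) ^ c)) * 0)) :=
        ENNReal.Tendsto.const_mul (hD0 m) (Or.inr ENNReal.ofReal_ne_top)
      rw [mul_zero] at h5
      exact h5
    calc (∫⁻ q in Em m, ENNReal.ofReal (a0 q * φ q) ∂volume)
        = Filter.liminf (fun n => ∫⁻ q in Em m,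
            ENNReal.ofReal (an n q * φ q) ∂volume) atTop := ((hWK m).liminf_eq).symm
      _ ≤ Filter.liminf (fun n => PhiA N s p (an n) (vn n)
            + ENNReal.ofReal (β * (((m:ℝ)+1) ^ c)) *
              ∫⁻ q in Em m, ENNReal.ofReal
                |(|v q.1 - v q.2| ^ p) - |vn n q.1 - vn n q.2| ^ p| ∂volume) atTop :=
          Filter.liminf_le_liminf (Eventually.of_forall hineq)
      _ ≤ Filter.liminf (fun n => PhiA N s p (an n) (vn n)) atTop :=
          liminf_add_tendsto_zero hc0'
  -- the supremum representation and conclusion of the main inequality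
  have hf0m : AEMeasurable (fun q : Euc N × Euc N => ENNReal.ofReal (a0 q * φ q)) volume :=
    (ha0.1.aemeasurable.mul hφm).ennreal_ofReal
  have hmain : PhiA N s p a0 v
      ≤ Filter.liminf (fun n => PhiA N s p (an n) (vn n)) atTop := by
    have hptsup : ∀ q : Euc N × Euc N, ENNReal.ofReal (a0 q * φ q)
        = ⨆ m : ℕ, (Em m).indicator (fun q => ENNReal.ofReal (a0 q * φ q)) q := by
      intro q
      refine le_antisymm ?_ (iSup_le fun m => Set.indicator_le_self _ _ q)
      by_cases hq : q.1 = q.2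
      · have hr0 : rr q = 0 := by
          rw [hrrdef]
          simp only [hq, sub_self, norm_zero]
          exact Real.zero_rpow hc0.ne'
        have hφz : φ q = 0 := by rw [hφdef]; simp [hr0]
        rw [hφz, mul_zero, ENNReal.ofReal_zero]
        exact zero_le
      · have hd : 0 < ‖q.1 - q.2‖ := by
          rw [norm_pos_iff]
          exact sub_ne_zero.2 hq
        obtain ⟨m, hm⟩ := exists_nat_ge (max (max ‖q.1‖ ‖q.2‖) (1/‖q.1 - q.2‖))
        have hqm : q ∈ Em m := by
          refine ⟨?_, ?_, ?_⟩
          · have h1 : 1/‖q.1 - q.2‖ ≤ (m:ℝ) := le_trans (le_max_right _ _) hm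
            rw [div_le_iff₀ (by positivity)]
            have h2 : (1:ℝ)/‖q.1 - q.2‖ ≤ (m:ℝ)+1 := by linarith
            have h3 := mul_le_mul_of_nonneg_left h2 hd.le
            rw [mul_one_div_cancel hd.ne'] at h3
            linarith [h3]
          · exact le_trans (le_trans (le_max_left _ _) (le_max_left _ _)) hm
          · exact le_trans (le_trans (le_max_right _ _) (le_max_left _ _)) hm
        calc ENNReal.ofReal (a0 q * φ q)
            = (Em m).indicator (fun q => ENNReal.ofReal (a0 q * φ q)) q :=
              (Set.indicator_of_mem hqm (fun q => ENNReal.ofReal (a0 q * φ q))).symm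
          _ ≤ ⨆ m : ℕ, (Em m).indicator (fun q => ENNReal.ofReal (a0 q * φ q)) q :=
              le_iSup (fun m => (Em m).indicator (fun q => ENNReal.ofReal (a0 q * φ q)) q) m
    calc PhiA N s p a0 v
        = ∫⁻ q, ENNReal.ofReal (a0 q * φ q) ∂volume := by
          simp only [PhiA, hφdef, hrrdef, mul_div_assoc, ← hcdef]
      _ = ∫⁻ q, ⨆ m : ℕ, (Em m).indicator
            (fun q => ENNReal.ofReal (a0 q * φ q)) q ∂volume :=
          lintegral_congr hptsup
      _ = ⨆ m : ℕ, ∫⁻ q, (Em m).indicator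
            (fun q => ENNReal.ofReal (a0 q * φ q)) q ∂volume := by
          refine lintegral_iSup' (fun m => hf0m.indicator (hEmeas m))
            (Eventually.of_forall fun q m1 m2 h => ?_)
          exact Set.indicator_le_indicator_of_subset (hEmono h) (fun _ => zero_le) q
      _ = ⨆ m : ℕ, ∫⁻ q in Em m, ENNReal.ofReal (a0 q * φ q) ∂volume := by
          refine iSup_congr fun m => ?_
          rw [lintegral_indicator (hEmeas m)]
      _ ≤ Filter.liminf (fun n => PhiA N s p (an n) (vn n)) atTop := iSup_le keym
  -- membership in W₀^{s,p}
  have hL_le_M : Filter.liminf (fun n => PhiA N s p (an n) (vn n)) atTop ≤ M := by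
    refine le_trans (Filter.liminf_le_liminf (Eventually.of_forall hM)) ?_
    simp [Filter.liminf_const]
  have hPhiM : PhiA N s p a0 v ≤ M := hmain.trans hL_le_M
  have hαne : ENNReal.ofReal α ≠ 0 := by
    simp [ENNReal.ofReal_eq_zero]; linarith
  have hgag : ENNReal.ofReal α * gagIntegral N s p v ≤ PhiA N s p a0 v := by
    have e1 : gagIntegral N s p v = ∫⁻ q, ENNReal.ofReal (φ q) ∂volume := by
      simp only [gagIntegral, hφdef, hrrdef, ← hcdef]
    have e2 : PhiA N s p a0 v = ∫⁻ q, ENNReal.ofReal (a0 q * φ q) ∂volume := by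
      simp only [PhiA, hφdef, hrrdef, mul_div_assoc, ← hcdef]
    rw [e1, e2, ← lintegral_const_mul' _ _ ENNReal.ofReal_ne_top]
    refine lintegral_mono_ae (ha0.2.2.mono fun q hq => ?_)
    rw [← ENNReal.ofReal_mul hα.le]
    exact ENNReal.ofReal_le_ofReal (mul_le_mul_of_nonneg_right hq.1 (hφ0 q))
  have hgagfin : gagIntegral N s p v < ⊤ := by
    have hle : gagIntegral N s p v ≤ M / ENNReal.ofReal α := by
      rw [ENNReal.le_div_iff_mul_le (Or.inl hαne) (Or.inl ENNReal.ofReal_ne_top)]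
      rw [mul_comm]
      exact hgag.trans hPhiM
    exact lt_of_le_of_lt hle (ENNReal.div_lt_top hMtop.ne hαne)
  have hsemi : gagSemi N s p v < ⊤ := by
    have : gagSemi N s p v = gagIntegral N s p v ^ (1/p) := rfl
    rw [this]
    exact ENNReal.rpow_lt_top_of_nonneg (by positivity) hgagfin.ne
  exact ⟨⟨hv, hsemi, hvΩ⟩, hmain⟩
end
end
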